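/- The tree inversion enumerator I_n(q) satisfies the Kreweras recurrence: I_0(q) = 1 and, for n ≥ 1, I_n(q) = Σ_{i=0}^{n-1} C(n-1,i) (1 + q + ... + q^i) I_i(q) I_{n-1-i}(q). -/

import Mathlib

open Finset Polynomial

/- ### the problem statement -/

/-- `j` lies on the unique path from `i` to the root `0` in the tree `T`. -/
def OnPath {n : ℕ} (T : SimpleGraph (Fin (n+1))) (i j : Fin (n+1)) : Prop :=
  ∀ p : T.Walk i 0, p.IsPath → j ∈ p.support

/-- The number of inversions of a tree on `{0,...,n}` rooted at `0`: pairs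
`(i,j)` with `1 ≤ i < j ≤ n` such that `j` is on the path from `i` to `0`. -/
noncomputable def treeInv {n : ℕ} (T : SimpleGraph (Fin (n+1))) : ℕ :=
  Nat.card {p : Fin (n+1) × Fin (n+1) //
    0 < p.1.val ∧ p.1 < p.2 ∧ OnPath T p.1 p.2}

/-- The tree inversion enumerator `I_n(q) = Σ_{T ∈ Tree(n+1)} q^{inv T}`. -/
noncomputable def treeInvEnum (n : ℕ) : Polynomial ℤ :=
  ∑ᶠ T : {G : SimpleGraph (Fin (n+1)) // G.IsTree}, X ^ treeInv T.val

set_option linter.unusedSectionVars false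
set_option maxHeartbeats 1000000
attribute [local instance] Classical.propDecidable
noncomputable section
namespace KrewerasAux


/-- parent (next) function of a finset of (child,parent) pairs -/
def nxt (T : Finset (ℕ × ℕ)) (a : ℕ) : ℕ :=
  if h : ∃! b : ℕ, (a, b) ∈ T then h.choose else a

/-- `b` is a strict ancestor of `a` -/
def reaches (T : Finset (ℕ × ℕ)) (a b : ℕ) : Prop :=
  ∃ k : ℕ, 0 < k ∧ (nxt T)^[k] a = b

/-- `T` is a rooted tree on vertex set `V` with root `r` -/
def IsRT (V : Finset ℕ) (r : ℕ) (T : Finset (ℕ × ℕ)) : Prop :=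
  T ⊆ (V.erase r) ×ˢ V ∧ (∀ v ∈ V.erase r, ∃! b : ℕ, (v, b) ∈ T) ∧
    ∀ v ∈ V.erase r, reaches T v r

def rtrees (V : Finset ℕ) (r : ℕ) : Finset (Finset (ℕ × ℕ)) :=
  ((V.erase r) ×ˢ V).powerset.filter (IsRT V r)

/-- number of inversions -/
def stat (V : Finset ℕ) (T : Finset (ℕ × ℕ)) : ℕ :=
  ((V ×ˢ V).filter (fun p => p.1 < p.2 ∧ reaches T p.1 p.2)).card

/-- inversion enumerator over trees on `V` rooted at `r` -/
def Ip (V : Finset ℕ) (r : ℕ) : Polynomial ℤ :=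
  ∑ T ∈ rtrees V r, X ^ stat V T

def rank (V : Finset ℕ) (c : ℕ) : ℕ := (V.filter (fun a => a < c)).card

/-- the Kreweras polynomial -/
def K : ℕ → Polynomial ℤ
  | 0 => 1
  | (n+1) => ∑ i ∈ (Finset.range (n+1)).attach,
      (Nat.choose n i.val : Polynomial ℤ) * (∑ k ∈ Finset.range (i.val+1), X ^ k) *
        K i.val * K (n - i.val)
  decreasing_by
  · exact Nat.lt_succ_of_le (Nat.le_of_lt_succ (Finset.mem_range.mp i.property))
  · exact Nat.lt_succ_of_le (Nat.sub_le _ _)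

lemma K_zero : K 0 = 1 := by simp [K]

lemma K_succ (n : ℕ) : K (n+1) = ∑ i ∈ Finset.range (n+1),
    (Nat.choose n i : Polynomial ℤ) * (∑ k ∈ Finset.range (i+1), X ^ k) *
      K i * K (n - i) := by
  rw [K]
  rw [← Finset.sum_attach (Finset.range (n+1)) (fun i =>
    (Nat.choose n i : Polynomial ℤ) * (∑ k ∈ Finset.range (i+1), X ^ k) * K i * K (n - i))]


/- ### basic lemmas about `nxt` -/

lemma nxt_eq_of_mem {T : Finset (ℕ × ℕ)} {a b : ℕ}
    (hu : ∃! b : ℕ, (a, b) ∈ T) (hab : (a, b) ∈ T) : nxt T a = b := by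
  rw [nxt, dif_pos hu]
  exact (hu.unique hu.choose_spec.1 hab ▸ rfl : hu.choose = b)

lemma nxt_mem_of_unique {T : Finset (ℕ × ℕ)} {a : ℕ}
    (hu : ∃! b : ℕ, (a, b) ∈ T) : (a, nxt T a) ∈ T := by
  rw [nxt, dif_pos hu]; exact hu.choose_spec.1

lemma nxt_eq_self {T : Finset (ℕ × ℕ)} {a : ℕ}
    (h : ∀ b, (a, b) ∉ T) : nxt T a = a := by
  rw [nxt, dif_neg]
  rintro ⟨b, hb, -⟩
  exact h b hb


/- ### lemmas under `IsRT` -/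
section RT
variable {V : Finset ℕ} {r : ℕ} {T : Finset (ℕ × ℕ)} (hT : IsRT V r T)

include hT

lemma mem_of_rt {a b : ℕ} (h : (a, b) ∈ T) : a ∈ V.erase r ∧ b ∈ V := by
  have := hT.1 h; rw [Finset.mem_product] at this; exact this

lemma nxt_mem_rt {a : ℕ} (ha : a ∈ V.erase r) : (a, nxt T a) ∈ T :=
  nxt_mem_of_unique (hT.2.1 a ha)

lemma nxt_eq_rt {a b : ℕ} (h : (a, b) ∈ T) : nxt T a = b :=
  nxt_eq_of_mem (hT.2.1 a (mem_of_rt hT h).1) h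

lemma nxt_fix_rt {a : ℕ} (ha : a ∉ V.erase r) : nxt T a = a := by
  refine nxt_eq_self (fun b hb => ha (mem_of_rt hT hb).1)

/-- iterates stay in `V` -/
lemma iter_mem_rt {a : ℕ} (ha : a ∈ V) : ∀ k, (nxt T)^[k] a ∈ V := by
  intro k
  induction k with
  | zero => simpa
  | succ k ih =>
    rw [Function.iterate_succ_apply']
    by_cases h : (nxt T)^[k] a ∈ V.erase r
    · exact (mem_of_rt hT (nxt_mem_rt hT h)).2
    · rwa [nxt_fix_rt hT h]

lemma reaches_mem_rt {a b : ℕ} (ha : a ∈ V) (h : reaches T a b) : b ∈ V := by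
  obtain ⟨k, -, rfl⟩ := h; exact iter_mem_rt hT ha k

/-- the root has no strict ancestors except itself -/
lemma iter_root_rt : ∀ k, (nxt T)^[k] r = r := by
  intro k
  induction k with
  | zero => simp
  | succ k ih => rw [Function.iterate_succ_apply', ih, nxt_fix_rt hT (Finset.notMem_erase _ _)]

lemma reaches_root_rt {b : ℕ} (h : reaches T r b) : b = r := by
  obtain ⟨k, -, rfl⟩ := h; exact iter_root_rt hT k

/-- everything in `V.erase r` reaches `r` -/
lemma reaches_r_rt {a : ℕ} (ha : a ∈ V.erase r) : reaches T a r := hT.2.2 a ha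

end RT

/- ### absorbing / agreement lemmas -/

/-- if iterates of `f` starting at `a` are in `S` for all `j < k`, and `f = g` on `S`,
then the `k`-th iterates agree -/
lemma iter_agree {f g : ℕ → ℕ} {S : Set ℕ} (hfg : ∀ x ∈ S, f x = g x) {a : ℕ} :
    ∀ k : ℕ, (∀ j < k, f^[j] a ∈ S) → f^[k] a = g^[k] a := by
  intro k
  induction k with
  | zero => simp
  | succ k ih =>
    intro h
    rw [Function.iterate_succ_apply', Function.iterate_succ_apply',
      ih (fun j hj => h j (Nat.lt_succ_of_lt hj)),
      ← ih (fun j hj => h j (Nat.lt_succ_of_lt hj)), hfg _ (h k (Nat.lt_succ_self k))]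

/-- once a fixed point is reached, iterates stay there -/
lemma iter_absorb {f : ℕ → ℕ} {x : ℕ} (hx : f x = x) {a : ℕ} {j : ℕ} (hj : f^[j] a = x) :
    ∀ k, j ≤ k → f^[k] a = x := by
  intro k hk
  obtain ⟨d, rfl⟩ := Nat.exists_eq_add_of_le hk
  rw [Nat.add_comm, Function.iterate_add_apply, hj]
  induction d with
  | zero => simp
  | succ d ih => rw [Function.iterate_succ_apply', ih (Nat.le_add_right _ _), hx]


/- ### new material -/

lemma reaches_of_nxt {T : Finset (ℕ × ℕ)} {a b : ℕ} (h : nxt T a = b) : reaches T a b :=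
  ⟨1, Nat.one_pos, h⟩

lemma reaches_head {T : Finset (ℕ × ℕ)} {a b : ℕ} (h : reaches T (nxt T a) b) :
    reaches T a b := by
  obtain ⟨k, hk, hit⟩ := h
  exact ⟨k + 1, Nat.succ_pos _, by rwa [Function.iterate_succ_apply]⟩

lemma reaches_trans {T : Finset (ℕ × ℕ)} {a b c : ℕ} (h1 : reaches T a b)
    (h2 : reaches T b c) : reaches T a c := by
  obtain ⟨k, hk, rfl⟩ := h1
  obtain ⟨l, hl, rfl⟩ := h2
  exact ⟨l + k, by omega, (Function.iterate_add_apply _ _ _ _)⟩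

lemma reaches_min {T : Finset (ℕ × ℕ)} {a b : ℕ} (h : reaches T a b) :
    ∃ k, (0 < k ∧ (nxt T)^[k] a = b) ∧ ∀ j, 0 < j → j < k → (nxt T)^[j] a ≠ b := by
  classical
  have hex : ∃ k, 0 < k ∧ (nxt T)^[k] a = b := h
  exact ⟨Nat.find hex, Nat.find_spec hex, fun j hj hjk hb => Nat.find_min hex hjk ⟨hj, hb⟩⟩

section Decomp

variable {V B : Finset ℕ} {r c : ℕ} {T₁ T₂ : Finset (ℕ × ℕ)}

/-- the union tree -/
def uT (T₁ T₂ : Finset (ℕ × ℕ)) (c r : ℕ) : Finset (ℕ × ℕ) := T₁ ∪ T₂ ∪ {(c, r)}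

variable (hr : r ∈ V) (hB : B ⊆ V.erase r) (hc : c ∈ B)
  (hT₁ : IsRT B c T₁) (hT₂ : IsRT (V \ B) r T₂)

lemma mem_uT {a b : ℕ} :
    (a, b) ∈ uT T₁ T₂ c r ↔ (a, b) ∈ T₁ ∨ (a, b) ∈ T₂ ∨ (a = c ∧ b = r) := by
  simp [uT, Prod.ext_iff, or_assoc]
  tauto

include hB in
lemma r_not_mem_B : r ∉ B := fun h => (Finset.mem_erase.mp (hB h)).1 rfl

include hB hc hT₁ hT₂ in
lemma uT_unique {v : ℕ} (hv : v ∈ V.erase r) : ∃! b : ℕ, (v, b) ∈ uT T₁ T₂ c r := by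
  by_cases hvB : v ∈ B
  · by_cases hvc : v = c
    · subst hvc
      refine ⟨r, mem_uT.mpr (Or.inr (Or.inr ⟨rfl, rfl⟩)), fun b hb => ?_⟩
      rcases mem_uT.mp hb with h | h | h
      · exact absurd (mem_of_rt hT₁ h).1 (by simp)
      · exact absurd (mem_of_rt hT₂ h).1 (by simp [Finset.mem_sdiff, hvB])
      · exact h.2
    · have hv1 : v ∈ B.erase c := Finset.mem_erase.mpr ⟨hvc, hvB⟩
      obtain ⟨b, hb, hub⟩ := hT₁.2.1 v hv1
      refine ⟨b, mem_uT.mpr (Or.inl hb), fun b' hb' => ?_⟩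
      rcases mem_uT.mp hb' with h | h | h
      · exact hub b' h
      · exact absurd (mem_of_rt hT₂ h).1 (by simp [Finset.mem_sdiff, hvB])
      · exact absurd h.1 hvc
  · have hv2 : v ∈ (V \ B).erase r := by
      rw [Finset.mem_erase] at hv ⊢
      exact ⟨hv.1, Finset.mem_sdiff.mpr ⟨hv.2, hvB⟩⟩
    obtain ⟨b, hb, hub⟩ := hT₂.2.1 v hv2
    refine ⟨b, mem_uT.mpr (Or.inr (Or.inl hb)), fun b' hb' => ?_⟩
    rcases mem_uT.mp hb' with h | h | h
    · exact absurd (mem_of_rt hT₁ h).1 (fun hh => hvB (Finset.mem_of_mem_erase hh))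
    · exact hub b' h
    · exact absurd (h.1 ▸ hc) hvB

include hB hc hT₁ hT₂ in
lemma nxt_uT_left {x : ℕ} (hx : x ∈ B.erase c) : nxt (uT T₁ T₂ c r) x = nxt T₁ x := by
  have hxB := Finset.mem_of_mem_erase hx
  have hu := uT_unique hB hc hT₁ hT₂ (hB hxB)
  exact nxt_eq_of_mem hu (mem_uT.mpr (Or.inl (nxt_mem_rt hT₁ hx)))

include hB hc hT₁ hT₂ in
lemma nxt_uT_c : nxt (uT T₁ T₂ c r) c = r := by
  have hu := uT_unique hB hc hT₁ hT₂ (hB hc)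
  exact nxt_eq_of_mem hu (mem_uT.mpr (Or.inr (Or.inr ⟨rfl, rfl⟩)))

include hB hc hT₁ hT₂ in
lemma nxt_uT_right {x : ℕ} (hx : x ∈ (V \ B).erase r) :
    nxt (uT T₁ T₂ c r) x = nxt T₂ x := by
  have hxV : x ∈ V.erase r := by
    rw [Finset.mem_erase] at hx ⊢
    exact ⟨hx.1, (Finset.mem_sdiff.mp hx.2).1⟩
  have hu := uT_unique hB hc hT₁ hT₂ hxV
  exact nxt_eq_of_mem hu (mem_uT.mpr (Or.inr (Or.inl (nxt_mem_rt hT₂ hx))))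

include hB hc hT₁ hT₂ in
lemma nxt_uT_fix {x : ℕ} (hx : x ∉ V.erase r) : nxt (uT T₁ T₂ c r) x = x := by
  refine nxt_eq_self (fun b hb => ?_)
  rcases mem_uT.mp hb with h | h | h
  · exact hx (hB (Finset.mem_of_mem_erase (mem_of_rt hT₁ h).1))
  · have := (mem_of_rt hT₂ h).1
    rw [Finset.mem_erase, Finset.mem_sdiff] at this
    exact hx (Finset.mem_erase.mpr ⟨this.1, this.2.1⟩)
  · exact hx (hB (h.1 ▸ hc))

end Decomp

section Decomp2
variable {V B : Finset ℕ} {r c : ℕ} {T₁ T₂ : Finset (ℕ × ℕ)}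
variable (hr : r ∈ V) (hB : B ⊆ V.erase r) (hc : c ∈ B)
  (hT₁ : IsRT B c T₁) (hT₂ : IsRT (V \ B) r T₂)

include hB hc hT₁ hT₂

lemma iter_uT_root : ∀ k, (nxt (uT T₁ T₂ c r))^[k] r = r := by
  intro k
  exact iter_absorb (nxt_uT_fix hB hc hT₁ hT₂ (Finset.notMem_erase _ _))
    (by simp : (nxt (uT T₁ T₂ c r))^[0] r = r) k (Nat.zero_le _)

lemma reaches_uT_of_left {a b : ℕ} (ha : a ∈ B.erase c) (h : reaches T₁ a b) :
    reaches (uT T₁ T₂ c r) a b := by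
  obtain ⟨k, ⟨hk, hkb⟩, hmin⟩ := reaches_min h
  have haB := Finset.mem_of_mem_erase ha
  have hint : ∀ j < k, (nxt T₁)^[j] a ∈ ((B.erase c : Finset ℕ) : Set ℕ) := by
    intro j hj
    rcases Nat.eq_zero_or_pos j with rfl | hj0
    · simpa using Finset.mem_coe.mpr ha
    · have hmem : (nxt T₁)^[j] a ∈ B := iter_mem_rt hT₁ haB j
      simp only [Finset.coe_erase, Set.mem_diff, Finset.mem_coe, Set.mem_singleton_iff]
      refine ⟨hmem, fun hcc => ?_⟩
      have habs : (nxt T₁)^[k] a = c :=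
        iter_absorb (nxt_fix_rt hT₁ (Finset.notMem_erase _ _)) hcc k (le_of_lt hj)
      exact hmin j hj0 hj (hcc.trans (habs.symm.trans hkb))
  have := iter_agree (f := nxt T₁) (g := nxt (uT T₁ T₂ c r))
    (S := ((B.erase c : Finset ℕ) : Set ℕ))
    (fun x hx => (nxt_uT_left hB hc hT₁ hT₂ (Finset.mem_coe.mp hx)).symm) k hint
  exact ⟨k, hk, by rw [← this, hkb]⟩

lemma reaches_uT_r {a : ℕ} (ha : a ∈ B) : reaches (uT T₁ T₂ c r) a r := by
  by_cases hac : a = c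
  · rw [hac]
    exact reaches_of_nxt (nxt_uT_c hB hc hT₁ hT₂)
  · have h1 : reaches T₁ a c := hT₁.2.2 a (Finset.mem_erase.mpr ⟨hac, ha⟩)
    exact reaches_trans (reaches_uT_of_left hB hc hT₁ hT₂ (Finset.mem_erase.mpr ⟨hac, ha⟩) h1)
      (reaches_of_nxt (nxt_uT_c hB hc hT₁ hT₂))

lemma reaches_uT_left_elim {b : ℕ} :
    ∀ k, 0 < k → ∀ a ∈ B, (nxt (uT T₁ T₂ c r))^[k] a = b →
      (b ∈ B ∧ reaches T₁ a b) ∨ b = r := by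
  intro k
  induction k with
  | zero => omega
  | succ k ih =>
    intro _ a ha hit
    by_cases hac : a = c
    · subst hac
      rw [Function.iterate_succ_apply, nxt_uT_c hB hc hT₁ hT₂,
        iter_uT_root hB hc hT₁ hT₂ k] at hit
      exact Or.inr hit.symm
    · have ha' : a ∈ B.erase c := Finset.mem_erase.mpr ⟨hac, ha⟩
      rw [Function.iterate_succ_apply, nxt_uT_left hB hc hT₁ hT₂ ha'] at hit
      have hmem : nxt T₁ a ∈ B := (mem_of_rt hT₁ (nxt_mem_rt hT₁ ha')).2
      rcases Nat.eq_zero_or_pos k with rfl | hk0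
      · simp only [Function.iterate_zero, id] at hit
        exact Or.inl ⟨hit ▸ hmem, hit ▸ reaches_of_nxt rfl⟩
      · rcases ih hk0 (nxt T₁ a) hmem hit with ⟨hbB, hre⟩ | hbr
        · exact Or.inl ⟨hbB, reaches_head hre⟩
        · exact Or.inr hbr

lemma iter_uT_right_agree :
    ∀ k, ∀ a ∈ V \ B, (nxt (uT T₁ T₂ c r))^[k] a = (nxt T₂)^[k] a := by
  intro k
  induction k with
  | zero => simp
  | succ k ih =>
    intro a ha
    rw [Function.iterate_succ_apply, Function.iterate_succ_apply]
    by_cases har' : a = r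
    · rw [har', nxt_uT_fix hB hc hT₁ hT₂ (Finset.notMem_erase r V),
        nxt_fix_rt hT₂ (Finset.notMem_erase r (V \ B))]
      exact ih r (har' ▸ ha)
    · have ha'' : a ∈ (V \ B).erase r := Finset.mem_erase.mpr ⟨har', ha⟩
      rw [nxt_uT_right hB hc hT₁ hT₂ ha'']
      exact ih _ ((mem_of_rt hT₂ (nxt_mem_rt hT₂ ha'')).2)

lemma reaches_uT_right_iff {a b : ℕ} (ha : a ∈ V \ B) :
    reaches (uT T₁ T₂ c r) a b ↔ reaches T₂ a b := by
  constructor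
  · rintro ⟨k, hk, rfl⟩
    exact ⟨k, hk, (iter_uT_right_agree hB hc hT₁ hT₂ k a ha).symm⟩
  · rintro ⟨k, hk, rfl⟩
    exact ⟨k, hk, iter_uT_right_agree hB hc hT₁ hT₂ k a ha⟩

include hr in
lemma isRT_uT : IsRT V r (uT T₁ T₂ c r) := by
  refine ⟨?_, fun v hv => uT_unique hB hc hT₁ hT₂ hv, fun v hv => ?_⟩
  · intro p hp
    obtain ⟨a, b⟩ := p
    rw [Finset.mem_product]
    rcases mem_uT.mp hp with h | h | h
    · obtain ⟨h1, h2⟩ := mem_of_rt hT₁ h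
      exact ⟨hB (Finset.mem_of_mem_erase h1), Finset.mem_of_mem_erase (hB h2)⟩
    · obtain ⟨h1, h2⟩ := mem_of_rt hT₂ h
      rw [Finset.mem_erase, Finset.mem_sdiff] at h1
      exact ⟨Finset.mem_erase.mpr ⟨h1.1, h1.2.1⟩, (Finset.mem_sdiff.mp h2).1⟩
    · exact ⟨h.1 ▸ hB hc, h.2 ▸ hr⟩
  · by_cases hvB : v ∈ B
    · exact reaches_uT_r hB hc hT₁ hT₂ hvB
    · have hv2 : v ∈ (V \ B).erase r := by
        rw [Finset.mem_erase] at hv ⊢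
        exact ⟨hv.1, Finset.mem_sdiff.mpr ⟨hv.2, hvB⟩⟩
      exact (reaches_uT_right_iff hB hc hT₁ hT₂ (Finset.mem_of_mem_erase hv2)).mpr
        (hT₂.2.2 v hv2)

include hr in
lemma stat_uT : stat V (uT T₁ T₂ c r) = stat B T₁ + rank B r + stat (V \ B) T₂ := by
  classical
  set S₁ := (B ×ˢ B).filter (fun p => p.1 < p.2 ∧ reaches T₁ p.1 p.2) with hS₁
  set S₂ := (B.filter (fun a => a < r)) ×ˢ ({r} : Finset ℕ) with hS₂
  set S₃ := ((V \ B) ×ˢ (V \ B)).filter (fun p => p.1 < p.2 ∧ reaches T₂ p.1 p.2) with hS₃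
  have hBV : ∀ x ∈ B, x ∈ V := fun x hx => Finset.mem_of_mem_erase (hB hx)
  have hset : (V ×ˢ V).filter (fun p => p.1 < p.2 ∧ reaches (uT T₁ T₂ c r) p.1 p.2) =
      (S₁ ∪ S₂) ∪ S₃ := by
    ext ⟨a, b⟩
    simp only [hS₁, hS₂, hS₃, Finset.mem_union, Finset.mem_filter, Finset.mem_product,
      Finset.mem_singleton, Finset.mem_sdiff]
    constructor
    · rintro ⟨⟨haV, hbV⟩, hab, hre⟩
      by_cases haB : a ∈ B
      · obtain ⟨k, hk, hit⟩ := hre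
        rcases reaches_uT_left_elim hB hc hT₁ hT₂ k hk a haB hit with ⟨hbB, hreT₁⟩ | rfl
        · exact Or.inl (Or.inl ⟨⟨haB, hbB⟩, hab, hreT₁⟩)
        · exact Or.inl (Or.inr ⟨⟨haB, hab⟩, rfl⟩)
      · have hre₂ := (reaches_uT_right_iff hB hc hT₁ hT₂
          (Finset.mem_sdiff.mpr ⟨haV, haB⟩)).mp hre
        have hbVB : b ∈ V \ B := reaches_mem_rt hT₂ (Finset.mem_sdiff.mpr ⟨haV, haB⟩) hre₂
        rw [Finset.mem_sdiff] at hbVB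
        exact Or.inr ⟨⟨⟨haV, haB⟩, hbVB⟩, hab, hre₂⟩
    · rintro ((⟨⟨haB, hbB⟩, hab, hre⟩ | ⟨⟨haB, hab⟩, rfl⟩) | ⟨⟨haVB, hbVB⟩, hab, hre⟩)
      · refine ⟨⟨hBV a haB, hBV b hbB⟩, hab, ?_⟩
        by_cases hac : a = c
        · exfalso
          have := reaches_root_rt hT₁ (hac ▸ hre)
          omega
        · exact reaches_uT_of_left hB hc hT₁ hT₂ (Finset.mem_erase.mpr ⟨hac, haB⟩) hre
      · exact ⟨⟨hBV a haB, hr⟩, hab, reaches_uT_r hB hc hT₁ hT₂ haB⟩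
      · exact ⟨⟨haVB.1, hbVB.1⟩, hab,
          (reaches_uT_right_iff hB hc hT₁ hT₂ (Finset.mem_sdiff.mpr haVB)).mpr hre⟩
  have hd₁₂ : Disjoint S₁ S₂ := by
    rw [Finset.disjoint_left]
    rintro ⟨a, b⟩ h1 h2
    simp only [hS₁, hS₂, Finset.mem_filter, Finset.mem_product, Finset.mem_singleton] at h1 h2
    exact r_not_mem_B hB (h2.2 ▸ h1.1.2)
  have hd₃ : Disjoint (S₁ ∪ S₂) S₃ := by
    rw [Finset.disjoint_left]
    rintro ⟨a, b⟩ h1 h3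
    simp only [hS₁, hS₂, hS₃, Finset.mem_union, Finset.mem_filter, Finset.mem_product,
      Finset.mem_singleton, Finset.mem_sdiff] at h1 h3
    rcases h1 with ⟨⟨haB, _⟩, _⟩ | ⟨⟨haB, _⟩, _⟩ <;> exact h3.1.1.2 haB
  rw [stat, hset, Finset.card_union_of_disjoint hd₃, Finset.card_union_of_disjoint hd₁₂]
  have h2card : S₂.card = rank B r := by
    rw [hS₂, Finset.card_product, Finset.card_singleton, mul_one, rank]
  rw [h2card]
  rfl

end Decomp2

/- ### canonical decomposition of a tree -/

def cOf (T : Finset (ℕ × ℕ)) (m r : ℕ) : ℕ :=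
  if h : ∃ k, 0 < k ∧ (nxt T)^[k] m = r then (nxt T)^[Nat.find h - 1] m else 0

def blockOf (T : Finset (ℕ × ℕ)) (V : Finset ℕ) (m r : ℕ) : Finset ℕ :=
  (V.erase r).filter (fun v => v = cOf T m r ∨ reaches T v (cOf T m r))

lemma nxt_filter {T : Finset (ℕ × ℕ)} {P : ℕ × ℕ → Prop} [DecidablePred P] {x : ℕ}
    (hu : ∃! b : ℕ, (x, b) ∈ T) (hP : P (x, nxt T x)) :
    nxt (T.filter P) x = nxt T x := by
  refine nxt_eq_of_mem ⟨nxt T x, Finset.mem_filter.mpr ⟨nxt_mem_of_unique hu, hP⟩,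
    fun b hb => hu.unique (Finset.mem_filter.mp hb).1 (nxt_mem_of_unique hu)⟩
    (Finset.mem_filter.mpr ⟨nxt_mem_of_unique hu, hP⟩)

lemma unique_filter {T : Finset (ℕ × ℕ)} {P : ℕ × ℕ → Prop} [DecidablePred P] {x : ℕ}
    (hu : ∃! b : ℕ, (x, b) ∈ T) (hP : P (x, nxt T x)) :
    ∃! b : ℕ, (x, b) ∈ T.filter P := by
  exact ⟨nxt T x, Finset.mem_filter.mpr ⟨nxt_mem_of_unique hu, hP⟩,
    fun b hb => hu.unique (Finset.mem_filter.mp hb).1 (nxt_mem_of_unique hu)⟩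

section Fwd

variable {V : Finset ℕ} {r m : ℕ} {T : Finset (ℕ × ℕ)}
variable (hT : IsRT V r T) (hr : r ∈ V) (hm : m ∈ V.erase r)

include hT hm

lemma cOf_spec : (cOf T m r, r) ∈ T ∧ cOf T m r ∈ V.erase r ∧
    (cOf T m r = m ∨ reaches T m (cOf T m r)) := by
  classical
  have h : ∃ k, 0 < k ∧ (nxt T)^[k] m = r := hT.2.2 m hm
  have hc : cOf T m r = (nxt T)^[Nat.find h - 1] m := by rw [cOf, dif_pos h]
  obtain ⟨hk0, hkr⟩ := Nat.find_spec h
  set k₀ := Nat.find h with hk₀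
  have hmV : m ∈ V := Finset.mem_of_mem_erase hm
  have hnxtc : nxt T (cOf T m r) = r := by
    have h2 : (nxt T)^[k₀ - 1 + 1] m = nxt T ((nxt T)^[k₀ - 1] m) :=
      Function.iterate_succ_apply' _ _ _
    rw [(by omega : k₀ - 1 + 1 = k₀)] at h2
    rw [hc, ← h2]
    exact hkr
  have hcV : cOf T m r ∈ V := by rw [hc]; exact iter_mem_rt hT hmV _
  have hcr : cOf T m r ≠ r := by
    intro hcr
    rcases Nat.lt_or_ge 1 k₀ with h1 | h1
    · exact Nat.find_min h (by omega : k₀ - 1 < k₀) ⟨by omega, by rw [← hc]; exact hcr⟩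
    · have : k₀ = 1 := by omega
      rw [this] at hc
      simp only [Nat.sub_self, Function.iterate_zero, id] at hc
      exact (Finset.mem_erase.mp hm).1 (hc ▸ hcr)
  have hcVe : cOf T m r ∈ V.erase r := Finset.mem_erase.mpr ⟨hcr, hcV⟩
  refine ⟨?_, hcVe, ?_⟩
  · have := nxt_mem_rt hT hcVe
    rwa [hnxtc] at this
  · rcases Nat.lt_or_ge 1 k₀ with h1 | h1
    · exact Or.inr ⟨k₀ - 1, by omega, hc.symm⟩
    · have : k₀ = 1 := by omega
      rw [this] at hc
      simp only [Nat.sub_self, Function.iterate_zero, id] at hc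
      exact Or.inl hc

lemma blockOf_subset : blockOf T V m r ⊆ V.erase r := Finset.filter_subset _ _

lemma mem_blockOf_self : m ∈ blockOf T V m r := by
  rcases (cOf_spec hT hm).2.2 with h | h
  · exact Finset.mem_filter.mpr ⟨hm, Or.inl h.symm⟩
  · exact Finset.mem_filter.mpr ⟨hm, Or.inr h⟩

lemma cOf_mem_blockOf : cOf T m r ∈ blockOf T V m r :=
  Finset.mem_filter.mpr ⟨(cOf_spec hT hm).2.1, Or.inl rfl⟩

/-- step closure of the block -/
lemma blockOf_step {a b : ℕ} (hab : (a, b) ∈ T)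
    (ha : a ∈ (blockOf T V m r).erase (cOf T m r)) : b ∈ blockOf T V m r := by
  have haB := Finset.mem_of_mem_erase ha
  have hac : a ≠ cOf T m r := (Finset.mem_erase.mp ha).1
  have hre : reaches T a (cOf T m r) := by
    rcases (Finset.mem_filter.mp haB).2 with h | h
    · exact absurd h hac
    · exact h
  have hb : b = nxt T a := (nxt_eq_rt hT hab).symm
  obtain ⟨k, hk, hit⟩ := hre
  have hbV : b ∈ V := (mem_of_rt hT hab).2
  have hbr : b ≠ r ∨ b = cOf T m r := by
    by_cases hbc : b = cOf T m r
    · exact Or.inr hbc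
    · left
      intro hbr
      rcases Nat.lt_or_ge 1 k with h1 | h1
      · have hre' : reaches T b (cOf T m r) := by
          refine ⟨k - 1, by omega, ?_⟩
          rw [hb, ← Function.iterate_succ_apply, Nat.succ_eq_add_one,
            (by omega : k - 1 + 1 = k)]
          exact hit
        rw [hbr] at hre'
        exact (Finset.mem_erase.mp (cOf_spec hT hm).2.1).1 (reaches_root_rt hT hre')
      · have hk1 : k = 1 := by omega
        rw [hk1] at hit
        simp only [Function.iterate_one] at hit
        exact hbc (hb.trans hit)
  rcases hbr with hbr | hbc
  · rcases Nat.lt_or_ge 1 k with h1 | h1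
    · refine Finset.mem_filter.mpr ⟨Finset.mem_erase.mpr ⟨hbr, hbV⟩, Or.inr ⟨k - 1, by omega, ?_⟩⟩
      rw [hb, ← Function.iterate_succ_apply, Nat.succ_eq_add_one,
        (by omega : k - 1 + 1 = k)]
      exact hit
    · have hk1 : k = 1 := by omega
      rw [hk1] at hit
      simp only [Function.iterate_one] at hit
      exact Finset.mem_filter.mpr ⟨Finset.mem_erase.mpr ⟨hbr, hbV⟩, Or.inl (hb.trans hit)⟩
  · exact hbc ▸ cOf_mem_blockOf hT hm

lemma blockOf_compl_step {a b : ℕ} (hab : (a, b) ∈ T) (ha : a ∉ blockOf T V m r) :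
    b ∉ blockOf T V m r := by
  intro hbB
  apply ha
  have haV : a ∈ V.erase r := (mem_of_rt hT hab).1
  have hb : b = nxt T a := (nxt_eq_rt hT hab).symm
  refine Finset.mem_filter.mpr ⟨haV, Or.inr ?_⟩
  rcases (Finset.mem_filter.mp hbB).2 with h | h
  · exact ⟨1, Nat.one_pos, by simp [← hb, h]⟩
  · exact reaches_trans ⟨1, Nat.one_pos, by simp [← hb]⟩ h

end Fwd

section Fwd2

variable {V : Finset ℕ} {r m : ℕ} {T : Finset (ℕ × ℕ)}
variable (hT : IsRT V r T) (hr : r ∈ V) (hm : m ∈ V.erase r)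

/-- the two parts of a tree -/
def part1 (T : Finset (ℕ × ℕ)) (V : Finset ℕ) (m r : ℕ) : Finset (ℕ × ℕ) :=
  T.filter (fun p => p.1 ∈ (blockOf T V m r).erase (cOf T m r))

def part2 (T : Finset (ℕ × ℕ)) (V : Finset ℕ) (m r : ℕ) : Finset (ℕ × ℕ) :=
  T.filter (fun p => p.1 ∉ blockOf T V m r)

include hT hm

lemma nxt_part1_eq {x : ℕ} (hx : x ∈ (blockOf T V m r).erase (cOf T m r)) :
    nxt (part1 T V m r) x = nxt T x := by
  unfold part1
  exact nxt_filter (P := fun p => p.1 ∈ (blockOf T V m r).erase (cOf T m r))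
    (hT.2.1 x (blockOf_subset hT hm (Finset.mem_of_mem_erase hx))) hx

lemma nxt_part2_eq {x : ℕ} (hx : x ∈ (V \ blockOf T V m r).erase r) :
    nxt (part2 T V m r) x = nxt T x := by
  have hx' := Finset.mem_erase.mp hx
  have hxV : x ∈ V.erase r := Finset.mem_erase.mpr ⟨hx'.1, (Finset.mem_sdiff.mp hx'.2).1⟩
  unfold part2
  exact nxt_filter (P := fun p => p.1 ∉ blockOf T V m r)
    (hT.2.1 x hxV) (Finset.mem_sdiff.mp hx'.2).2

lemma isRT_part1 : IsRT (blockOf T V m r) (cOf T m r) (part1 T V m r) := by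
  refine ⟨?_, ?_, ?_⟩
  · intro p hp
    obtain ⟨a, b⟩ := p
    obtain ⟨hpT, hp1⟩ := Finset.mem_filter.mp hp
    exact Finset.mem_product.mpr ⟨hp1, blockOf_step hT hm hpT hp1⟩
  · intro v hv
    unfold part1
    exact unique_filter (P := fun p => p.1 ∈ (blockOf T V m r).erase (cOf T m r))
      (hT.2.1 v (blockOf_subset hT hm (Finset.mem_of_mem_erase hv))) hv
  · intro v hv
    obtain ⟨hvc, hvB⟩ := Finset.mem_erase.mp hv
    have hre : reaches T v (cOf T m r) := by
      rcases (Finset.mem_filter.mp hvB).2 with h | h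
      · exact absurd h hvc
      · exact h
    obtain ⟨k, ⟨hk, hkc⟩, hmin⟩ := reaches_min hre
    have hvV : v ∈ V := Finset.mem_of_mem_erase (blockOf_subset hT hm hvB)
    have hint : ∀ j < k, (nxt T)^[j] v ∈ (((blockOf T V m r).erase (cOf T m r) : Finset ℕ) : Set ℕ) := by
      intro j hj
      rcases Nat.eq_zero_or_pos j with rfl | hj0
      · simpa using Finset.mem_coe.mpr hv
      · have hxV : (nxt T)^[j] v ∈ V := iter_mem_rt hT hvV j
        have hxc : (nxt T)^[j] v ≠ cOf T m r := fun h => hmin j hj0 hj h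
        have hrex : reaches T ((nxt T)^[j] v) (cOf T m r) := by
          refine ⟨k - j, by omega, ?_⟩
          rw [← Function.iterate_add_apply, (by omega : k - j + j = k)]
          exact hkc
        have hxr : (nxt T)^[j] v ≠ r := by
          intro hxr
          rw [hxr] at hrex
          exact (Finset.mem_erase.mp (cOf_spec hT hm).2.1).1 (reaches_root_rt hT hrex)
        exact Finset.mem_coe.mpr (Finset.mem_erase.mpr ⟨hxc,
          Finset.mem_filter.mpr ⟨Finset.mem_erase.mpr ⟨hxr, hxV⟩, Or.inr hrex⟩⟩)
    have := iter_agree (f := nxt T) (g := nxt (part1 T V m r))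
      (S := (((blockOf T V m r).erase (cOf T m r) : Finset ℕ) : Set ℕ))
      (fun x hx => (nxt_part1_eq hT hm (Finset.mem_coe.mp hx)).symm) k hint
    exact ⟨k, hk, by rw [← this]; exact hkc⟩

lemma isRT_part2 : IsRT (V \ blockOf T V m r) r (part2 T V m r) := by
  refine ⟨?_, ?_, ?_⟩
  · intro p hp
    obtain ⟨a, b⟩ := p
    obtain ⟨hpT, hp1⟩ := Finset.mem_filter.mp hp
    have haV := (mem_of_rt hT hpT).1
    refine Finset.mem_product.mpr ⟨Finset.mem_erase.mpr ⟨(Finset.mem_erase.mp haV).1,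
      Finset.mem_sdiff.mpr ⟨Finset.mem_of_mem_erase haV, hp1⟩⟩,
      Finset.mem_sdiff.mpr ⟨(mem_of_rt hT hpT).2, blockOf_compl_step hT hm hpT hp1⟩⟩
  · intro v hv
    have hv' := Finset.mem_erase.mp hv
    unfold part2
    exact unique_filter (P := fun p => p.1 ∉ blockOf T V m r)
      (hT.2.1 v (Finset.mem_erase.mpr ⟨hv'.1, (Finset.mem_sdiff.mp hv'.2).1⟩))
      (Finset.mem_sdiff.mp hv'.2).2
  · intro v hv
    have hv' := Finset.mem_erase.mp hv
    have hvV : v ∈ V.erase r := Finset.mem_erase.mpr ⟨hv'.1, (Finset.mem_sdiff.mp hv'.2).1⟩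
    have hvB : v ∉ blockOf T V m r := (Finset.mem_sdiff.mp hv'.2).2
    obtain ⟨k, ⟨hk, hkr⟩, hmin⟩ := reaches_min (hT.2.2 v hvV)
    have hint : ∀ j < k, (nxt T)^[j] v ∈ (((V \ blockOf T V m r).erase r : Finset ℕ) : Set ℕ) := by
      intro j hj
      rcases Nat.eq_zero_or_pos j with rfl | hj0
      · simpa using Finset.mem_coe.mpr hv
      · have hxV : (nxt T)^[j] v ∈ V := iter_mem_rt hT (Finset.mem_of_mem_erase hvV) j
        have hxr : (nxt T)^[j] v ≠ r := fun h => hmin j hj0 hj h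
        have hxB : (nxt T)^[j] v ∉ blockOf T V m r := by
          intro hxB
          apply hvB
          have hrevx : reaches T v ((nxt T)^[j] v) := ⟨j, hj0, rfl⟩
          refine Finset.mem_filter.mpr ⟨hvV, Or.inr ?_⟩
          rcases (Finset.mem_filter.mp hxB).2 with h | h
          · exact h ▸ hrevx
          · exact reaches_trans hrevx h
        exact Finset.mem_coe.mpr (Finset.mem_erase.mpr ⟨hxr, Finset.mem_sdiff.mpr ⟨hxV, hxB⟩⟩)
    have := iter_agree (f := nxt T) (g := nxt (part2 T V m r))
      (S := (((V \ blockOf T V m r).erase r : Finset ℕ) : Set ℕ))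
      (fun x hx => (nxt_part2_eq hT hm (Finset.mem_coe.mp hx)).symm) k hint
    exact ⟨k, hk, by rw [← this]; exact hkr⟩

lemma decomp_eq : T = uT (part1 T V m r) (part2 T V m r) (cOf T m r) r := by
  ext ⟨a, b⟩
  rw [mem_uT]
  constructor
  · intro hab
    have haV := (mem_of_rt hT hab).1
    by_cases haB : a ∈ blockOf T V m r
    · by_cases hac : a = cOf T m r
      · refine Or.inr (Or.inr ⟨hac, ?_⟩)
        have h1 := nxt_eq_rt hT hab
        have h2 := nxt_eq_rt hT (hac ▸ (cOf_spec hT hm).1 : (a, r) ∈ T)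
        rw [← h1, h2]
      · exact Or.inl (Finset.mem_filter.mpr ⟨hab, Finset.mem_erase.mpr ⟨hac, haB⟩⟩)
    · exact Or.inr (Or.inl (Finset.mem_filter.mpr ⟨hab, haB⟩))
  · rintro (h | h | ⟨rfl, rfl⟩)
    · exact Finset.mem_filter.mp h |>.1
    · exact Finset.mem_filter.mp h |>.1
    · exact (cOf_spec hT hm).1

end Fwd2

section Rev

variable {V B : Finset ℕ} {r c m : ℕ} {T₁ T₂ : Finset (ℕ × ℕ)}
variable (hr : r ∈ V) (hB : B ⊆ V.erase r) (hc : c ∈ B) (hm : m ∈ B)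
  (hT₁ : IsRT B c T₁) (hT₂ : IsRT (V \ B) r T₂)

include hB hc hm hT₁ hT₂

lemma cOf_uT : cOf (uT T₁ T₂ c r) m r = c := by
  classical
  have hre : reaches (uT T₁ T₂ c r) m r := reaches_uT_r hB hc hT₁ hT₂ hm
  have h : ∃ k, 0 < k ∧ (nxt (uT T₁ T₂ c r))^[k] m = r := hre
  rw [cOf, dif_pos h]
  by_cases hmc : m = c
  · have hfind : Nat.find h = 1 := by
      rw [Nat.find_eq_iff]
      refine ⟨⟨Nat.one_pos, by simp [hmc, nxt_uT_c hB hc hT₁ hT₂]⟩, ?_⟩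
      intro j hj
      omega
    rw [hfind]
    simpa using hmc
  · have hm' : m ∈ B.erase c := Finset.mem_erase.mpr ⟨hmc, hm⟩
    obtain ⟨k₁, ⟨hk₁, hk₁c⟩, hmin₁⟩ := reaches_min (hT₁.2.2 m hm')
    -- intermediates of the T₁-chain lie in B.erase c
    have hint : ∀ j < k₁, (nxt T₁)^[j] m ∈ ((B.erase c : Finset ℕ) : Set ℕ) := by
      intro j hj
      rcases Nat.eq_zero_or_pos j with rfl | hj0
      · simpa using Finset.mem_coe.mpr hm'
      · have hmem : (nxt T₁)^[j] m ∈ B := iter_mem_rt hT₁ hm j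
        simp only [Finset.coe_erase, Set.mem_diff, Finset.mem_coe, Set.mem_singleton_iff]
        refine ⟨hmem, fun hcc => ?_⟩
        have habs : (nxt T₁)^[k₁] m = c :=
          iter_absorb (nxt_fix_rt hT₁ (Finset.notMem_erase _ _)) hcc k₁ (le_of_lt hj)
        exact hmin₁ j hj0 hj (hcc.trans (habs.symm.trans hk₁c))
    have hagree : ∀ j ≤ k₁, (nxt (uT T₁ T₂ c r))^[j] m = (nxt T₁)^[j] m := by
      intro j hj
      exact (iter_agree (f := nxt T₁) (g := nxt (uT T₁ T₂ c r))
        (S := ((B.erase c : Finset ℕ) : Set ℕ))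
        (fun x hx => (nxt_uT_left hB hc hT₁ hT₂ (Finset.mem_coe.mp hx)).symm) j
        (fun i hi => hint i (lt_of_lt_of_le hi hj))).symm
    have hUk₁ : (nxt (uT T₁ T₂ c r))^[k₁] m = c := by rw [hagree k₁ le_rfl, hk₁c]
    have hUk₁' : (nxt (uT T₁ T₂ c r))^[k₁ + 1] m = r := by
      rw [Function.iterate_succ_apply', hUk₁]
      exact nxt_uT_c hB hc hT₁ hT₂
    have hfind : Nat.find h = k₁ + 1 := by
      rw [Nat.find_eq_iff]
      refine ⟨⟨Nat.succ_pos _, hUk₁'⟩, fun j hj hcon => ?_⟩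
      obtain ⟨hj0, hjr⟩ := hcon
      have hjB : (nxt (uT T₁ T₂ c r))^[j] m ∈ B := by
        rcases Nat.lt_or_ge j k₁ with hlt | hge
        · rw [hagree j (le_of_lt hlt)]
          exact Finset.mem_of_mem_erase (Finset.mem_coe.mp (hint j hlt))
        · have : j = k₁ := by omega
          rw [this, hUk₁]
          exact hc
      rw [hjr] at hjB
      exact r_not_mem_B hB hjB
    rw [hfind]
    simpa using hUk₁

lemma blockOf_uT : blockOf (uT T₁ T₂ c r) V m r = B := by
  rw [blockOf, cOf_uT hB hc hm hT₁ hT₂]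
  ext v
  rw [Finset.mem_filter]
  constructor
  · rintro ⟨hvV, hv | hv⟩
    · exact hv ▸ hc
    · by_contra hvB
      have hvVB : v ∈ V \ B := Finset.mem_sdiff.mpr ⟨Finset.mem_of_mem_erase hvV, hvB⟩
      have := (reaches_uT_right_iff hB hc hT₁ hT₂ hvVB).mp hv
      have hcVB : c ∈ V \ B := reaches_mem_rt hT₂ hvVB this
      exact (Finset.mem_sdiff.mp hcVB).2 hc
  · intro hvB
    refine ⟨hB hvB, ?_⟩
    by_cases hvc : v = c
    · exact Or.inl hvc
    · exact Or.inr (reaches_uT_of_left hB hc hT₁ hT₂ (Finset.mem_erase.mpr ⟨hvc, hvB⟩)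
        (hT₁.2.2 v (Finset.mem_erase.mpr ⟨hvc, hvB⟩)))

lemma part1_uT : part1 (uT T₁ T₂ c r) V m r = T₁ := by
  unfold part1
  rw [blockOf_uT hB hc hm hT₁ hT₂, cOf_uT hB hc hm hT₁ hT₂]
  ext ⟨a, b⟩
  rw [Finset.mem_filter, mem_uT]
  constructor
  · rintro ⟨h | h | ⟨rfl, rfl⟩, ha⟩
    · exact h
    · exact absurd (Finset.mem_of_mem_erase ha)
        (Finset.mem_sdiff.mp (Finset.mem_of_mem_erase (mem_of_rt hT₂ h).1)).2
    · exact absurd rfl (Finset.mem_erase.mp ha).1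
  · intro h
    exact ⟨Or.inl h, (mem_of_rt hT₁ h).1⟩

lemma part2_uT : part2 (uT T₁ T₂ c r) V m r = T₂ := by
  unfold part2
  rw [blockOf_uT hB hc hm hT₁ hT₂]
  ext ⟨a, b⟩
  rw [Finset.mem_filter, mem_uT]
  constructor
  · rintro ⟨h | h | ⟨rfl, rfl⟩, ha⟩
    · exact absurd (Finset.mem_of_mem_erase (mem_of_rt hT₁ h).1) ha
    · exact h
    · exact absurd hc ha
  · intro h
    exact ⟨Or.inr (Or.inl h),
      (Finset.mem_sdiff.mp (Finset.mem_of_mem_erase (mem_of_rt hT₂ h).1)).2⟩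

end Rev

lemma mem_rtrees {V : Finset ℕ} {r : ℕ} {T : Finset (ℕ × ℕ)} :
    T ∈ rtrees V r ↔ IsRT V r T := by
  rw [rtrees, Finset.mem_filter, Finset.mem_powerset]
  exact ⟨fun h => h.2, fun h => ⟨h.1, h⟩⟩

section GrandSum

variable {V B : Finset ℕ} {r c m : ℕ}

lemma fiber_sum (hr : r ∈ V) (hm : m ∈ V.erase r) (hBsub : B ⊆ V.erase r)
    (hmB : m ∈ B) (hcB : c ∈ B) :
    ∑ T ∈ ((rtrees V r).filter (fun T => blockOf T V m r = B)).filter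
        (fun T => cOf T m r = c), X ^ stat V T
      = ∑ p ∈ rtrees B c ×ˢ rtrees (V \ B) r,
          (X : Polynomial ℤ) ^ (stat B p.1 + rank B r + stat (V \ B) p.2) := by
  classical
  refine Finset.sum_bij' (fun T _ => (part1 T V m r, part2 T V m r))
    (fun p _ => uT p.1 p.2 c r) ?_ ?_ ?_ ?_ ?_
  · -- forward membership
    intro T hT'
    obtain ⟨hT'', hcOf⟩ := Finset.mem_filter.mp hT'
    obtain ⟨hTmem, hblock⟩ := Finset.mem_filter.mp hT''
    have hT := mem_rtrees.mp hTmem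
    rw [Finset.mem_product, mem_rtrees, mem_rtrees]
    constructor
    · have := isRT_part1 hT hm
      rwa [hblock, hcOf] at this
    · have := isRT_part2 hT hm
      rwa [hblock] at this
  · -- backward membership
    rintro ⟨T₁, T₂⟩ hp
    rw [Finset.mem_product, mem_rtrees, mem_rtrees] at hp
    obtain ⟨hT₁, hT₂⟩ := hp
    refine Finset.mem_filter.mpr ⟨Finset.mem_filter.mpr
      ⟨mem_rtrees.mpr (isRT_uT hr hBsub hcB hT₁ hT₂), ?_⟩, ?_⟩
    · exact blockOf_uT hBsub hcB hmB hT₁ hT₂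
    · exact cOf_uT hBsub hcB hmB hT₁ hT₂
  · -- left inverse
    intro T hT'
    obtain ⟨hT'', hcOf⟩ := Finset.mem_filter.mp hT'
    obtain ⟨hTmem, hblock⟩ := Finset.mem_filter.mp hT''
    have hT := mem_rtrees.mp hTmem
    have := decomp_eq hT hm
    rw [hcOf] at this
    exact this.symm
  · -- right inverse
    rintro ⟨T₁, T₂⟩ hp
    rw [Finset.mem_product, mem_rtrees, mem_rtrees] at hp
    obtain ⟨hT₁, hT₂⟩ := hp
    have h1 := part1_uT hBsub hcB hmB hT₁ hT₂
    have h2 := part2_uT hBsub hcB hmB hT₁ hT₂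
    simp only [Prod.mk.injEq]
    exact ⟨h1, h2⟩
  · -- weights
    intro T hT'
    obtain ⟨hT'', hcOf⟩ := Finset.mem_filter.mp hT'
    obtain ⟨hTmem, hblock⟩ := Finset.mem_filter.mp hT''
    have hT := mem_rtrees.mp hTmem
    have hT₁ := isRT_part1 hT hm
    have hT₂ := isRT_part2 hT hm
    rw [hblock, hcOf] at hT₁
    rw [hblock] at hT₂
    have hstat : stat V T = stat B (part1 T V m r) + rank B r + stat (V \ B) (part2 T V m r) := by
      conv_lhs => rw [decomp_eq hT hm]
      rw [hcOf]
      have := stat_uT hr hBsub hcB hT₁ hT₂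
      rw [← hblock] at this ⊢
      rw [hblock] at this ⊢
      exact this
    rw [hstat]

lemma Ip_decomp (hr : r ∈ V) (hW : (V.erase r).Nonempty) :
    Ip V r = ∑ B ∈ (V.erase r).powerset.filter (fun B => (V.erase r).min' hW ∈ B),
      (∑ c ∈ B, Ip B c) * (Ip (V \ B) r * X ^ rank B r) := by
  classical
  have hm : (V.erase r).min' hW ∈ V.erase r := Finset.min'_mem _ _
  set m := (V.erase r).min' hW with hmdef
  rw [Ip, ← Finset.sum_fiberwise_of_maps_to (t := (V.erase r).powerset.filter (fun B => m ∈ B))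
    (g := fun T => blockOf T V m r) (fun T hTmem => ?_) (fun T => X ^ stat V T)]
  swap
  · have hT := mem_rtrees.mp hTmem
    exact Finset.mem_filter.mpr ⟨Finset.mem_powerset.mpr (blockOf_subset hT hm),
      mem_blockOf_self hT hm⟩
  refine Finset.sum_congr rfl (fun B hB' => ?_)
  obtain ⟨hBpow, hmB⟩ := Finset.mem_filter.mp hB'
  have hBsub : B ⊆ V.erase r := Finset.mem_powerset.mp hBpow
  rw [← Finset.sum_fiberwise_of_maps_to (t := B) (g := fun T => cOf T m r)
    (fun T hT' => ?_) (fun T => X ^ stat V T)]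
  swap
  · obtain ⟨hTmem, hblock⟩ := Finset.mem_filter.mp hT'
    have hT := mem_rtrees.mp hTmem
    have := cOf_mem_blockOf hT hm
    rwa [hblock] at this
  rw [Finset.sum_mul]
  refine Finset.sum_congr rfl (fun c hcB => ?_)
  rw [fiber_sum hr hm hBsub hmB hcB]
  rw [Ip, Ip, Finset.sum_product, Finset.sum_mul (s := rtrees (V \ B) r),
    Finset.sum_mul_sum]
  refine Finset.sum_congr rfl (fun T₁ _ => Finset.sum_congr rfl (fun T₂ _ => ?_))
  dsimp only
  rw [← pow_add, ← pow_add]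
  congr 1
  omega

end GrandSum

/- ### rank lemmas -/

lemma rank_min' {B : Finset ℕ} (hB : B.Nonempty) : rank B (B.min' hB) = 0 := by
  rw [rank, Finset.card_eq_zero, Finset.filter_eq_empty_iff]
  intro a ha
  exact not_lt.mpr (Finset.min'_le B a ha)

lemma rank_erase_min' {B : Finset ℕ} (hB : B.Nonempty) {c : ℕ}
    (hc : c ∈ B.erase (B.min' hB)) : rank B c = rank (B.erase (B.min' hB)) c + 1 := by
  have hmc : B.min' hB < c := Finset.min'_lt_of_mem_erase_min' B hB hc
  have hmB : B.min' hB ∈ B := Finset.min'_mem _ _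
  rw [rank, rank]
  have h1 : B.filter (fun a => a < c) =
      insert (B.min' hB) ((B.erase (B.min' hB)).filter (fun a => a < c)) := by
    ext a
    simp only [Finset.mem_filter, Finset.mem_insert, Finset.mem_erase]
    constructor
    · rintro ⟨haB, hac⟩
      by_cases ham : a = B.min' hB
      · exact Or.inl ham
      · exact Or.inr ⟨⟨ham, haB⟩, hac⟩
    · rintro (rfl | ⟨⟨ham, haB⟩, hac⟩)
      · exact ⟨hmB, hmc⟩
      · exact ⟨haB, hac⟩
  rw [h1, Finset.card_insert_of_notMem (fun h => (Finset.mem_erase.mp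
    (Finset.mem_filter.mp h).1).1 rfl)]

lemma rank_sum (B : Finset ℕ) :
    ∑ c ∈ B, (X : Polynomial ℤ) ^ rank B c = ∑ j ∈ Finset.range B.card, X ^ j := by
  classical
  suffices h : ∀ n (B : Finset ℕ), B.card = n →
      ∑ c ∈ B, (X : Polynomial ℤ) ^ rank B c = ∑ j ∈ Finset.range B.card, X ^ j by
    exact h _ B rfl
  intro n
  induction n with
  | zero =>
    intro B hB
    rw [Finset.card_eq_zero.mp hB]
    simp
  | succ n ih =>
    intro B hB
    have hne : B.Nonempty := Finset.card_pos.mp (by omega)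
    set m := B.min' hne with hm
    have hmB : m ∈ B := Finset.min'_mem _ _
    rw [← Finset.add_sum_erase _ _ hmB, rank_min' hne]
    have h2 : ∀ c ∈ B.erase m, (X : Polynomial ℤ) ^ rank B c =
        X * X ^ rank (B.erase m) c := by
      intro c hc
      rw [rank_erase_min' hne hc, pow_succ, mul_comm]
    rw [Finset.sum_congr rfl h2, ← Finset.mul_sum,
      ih (B.erase m) (by rw [Finset.card_erase_of_mem hmB, hB]; rfl),
      Finset.card_erase_of_mem hmB, hB]
    rw [Finset.sum_range_succ' (fun j => (X : Polynomial ℤ) ^ j)]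
    simp only [pow_zero, pow_succ]
    rw [add_comm, Finset.mul_sum]
    congr 1
    refine Finset.sum_congr rfl (fun j _ => ?_)
    ring

lemma rank_split {V B : Finset ℕ} {r : ℕ} (hB : B ⊆ V) :
    rank B r + rank (V \ B) r = rank V r := by
  classical
  rw [rank, rank, rank]
  rw [← Finset.card_union_of_disjoint (Finset.disjoint_filter_filter
    (Finset.disjoint_sdiff : Disjoint B (V \ B)))]
  congr 1
  rw [← Finset.filter_union, Finset.union_sdiff_of_subset hB]

/- ### base case -/

lemma rtrees_singleton (r : ℕ) : rtrees {r} r = {∅} := by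
  ext T
  rw [mem_rtrees]
  simp only [Finset.mem_singleton]
  constructor
  · intro h
    have h1 := h.1
    rw [Finset.erase_singleton, Finset.empty_product, Finset.subset_empty] at h1
    exact h1
  · rintro rfl
    refine ⟨by simp, ?_, ?_⟩ <;> simp [Finset.erase_singleton]

lemma Ip_singleton (r : ℕ) : Ip {r} r = 1 := by
  rw [Ip, rtrees_singleton, Finset.sum_singleton]
  have : stat {r} ∅ = 0 := by
    rw [stat, Finset.card_eq_zero, Finset.filter_eq_empty_iff]
    intro p hp
    rw [Finset.mem_product, Finset.mem_singleton, Finset.mem_singleton] at hp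
    rw [hp.1, hp.2]
    simp
  rw [this, pow_zero]

/- ### the main induction -/

theorem Ip_eq : ∀ n (V : Finset ℕ) (r : ℕ), r ∈ V → V.card = n →
    Ip V r = X ^ rank V r * K (V.card - 1) := by
  intro n
  induction n using Nat.strong_induction_on with
  | _ n ih =>
    intro V r hr hcard
    rcases Nat.lt_or_ge n 2 with hn2 | hn2
    · -- base case : V = {r}
      have hn1 : n = 1 := by
        have : 0 < V.card := Finset.card_pos.mpr ⟨r, hr⟩
        omega
      obtain ⟨a, ha⟩ := Finset.card_eq_one.mp (hcard.trans hn1)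
      have har : a = r := by
        have := hr
        rw [ha, Finset.mem_singleton] at this
        exact this.symm
      subst har
      rw [ha, Ip_singleton]
      have h0 : rank {a} a = 0 := by
        rw [rank, Finset.card_eq_zero, Finset.filter_eq_empty_iff]
        intro b hb
        rw [Finset.mem_singleton] at hb
        omega
      rw [h0, pow_zero, Finset.card_singleton]
      norm_num [K_zero]
    · -- inductive step
      have hWcard : (V.erase r).card = n - 1 := by
        rw [Finset.card_erase_of_mem hr, hcard]
      have hW : (V.erase r).Nonempty := Finset.card_pos.mp (by omega)
      set m := (V.erase r).min' hW with hmdef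
      have hm : m ∈ V.erase r := Finset.min'_mem _ _
      rw [Ip_decomp hr hW]
      -- rewrite each summand using the induction hypothesis
      have hsummand : ∀ B ∈ (V.erase r).powerset.filter (fun B => m ∈ B),
          (∑ c ∈ B, Ip B c) * (Ip (V \ B) r * X ^ rank B r) =
          X ^ rank V r * ((∑ j ∈ Finset.range B.card, (X : Polynomial ℤ) ^ j) *
            (K (B.card - 1) * K (V.card - B.card - 1))) := by
        intro B hB'
        obtain ⟨hBpow, hmB⟩ := Finset.mem_filter.mp hB'
        have hBsub : B ⊆ V.erase r := Finset.mem_powerset.mp hBpow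
        have hBV : B ⊆ V := hBsub.trans (Finset.erase_subset _ _)
        have hBne : B.Nonempty := ⟨m, hmB⟩
        have hBcard_le : B.card ≤ n - 1 := hWcard ▸ Finset.card_le_card hBsub
        have hBcard_pos : 0 < B.card := Finset.card_pos.mpr hBne
        have hVBcard : (V \ B).card = V.card - B.card := Finset.card_sdiff_of_subset hBV
        have hrVB : r ∈ V \ B := Finset.mem_sdiff.mpr
          ⟨hr, fun h => (Finset.mem_erase.mp (hBsub h)).1 rfl⟩
        -- IH on each `Ip B c`
        have h1 : ∀ c ∈ B, Ip B c = X ^ rank B c * K (B.card - 1) := by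
          intro c hc
          exact ih B.card (by omega) B c hc rfl
        have h2 : Ip (V \ B) r = X ^ rank (V \ B) r * K ((V \ B).card - 1) := by
          refine ih (V \ B).card ?_ (V \ B) r hrVB rfl
          rw [hVBcard]; omega
        rw [Finset.sum_congr rfl h1, h2, ← Finset.sum_mul, rank_sum]
        rw [hVBcard]
        have hpow : (X : Polynomial ℤ) ^ rank (V \ B) r * X ^ rank B r =
            X ^ rank V r := by
          rw [← pow_add]
          congr 1
          rw [add_comm]
          exact rank_split hBV
        ring_nf
        rw [← hpow]
      rw [Finset.sum_congr rfl hsummand, ← Finset.mul_sum]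
      congr 1
      -- reindex by `A = B.erase m`
      have hbij : ∑ B ∈ (V.erase r).powerset.filter (fun B => m ∈ B),
          ((∑ j ∈ Finset.range B.card, (X : Polynomial ℤ) ^ j) *
            (K (B.card - 1) * K (V.card - B.card - 1))) =
          ∑ A ∈ ((V.erase r).erase m).powerset,
          ((∑ j ∈ Finset.range (A.card + 1), (X : Polynomial ℤ) ^ j) *
            (K A.card * K (V.card - (A.card + 1) - 1))) := by
        refine Finset.sum_bij' (fun B _ => B.erase m) (fun A _ => insert m A) ?_ ?_ ?_ ?_ ?_
        · intro B hB'
          obtain ⟨hBpow, hmB⟩ := Finset.mem_filter.mp hB'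
          exact Finset.mem_powerset.mpr
            (Finset.erase_subset_erase m (Finset.mem_powerset.mp hBpow))
        · intro A hA
          have hA' := Finset.mem_powerset.mp hA
          refine Finset.mem_filter.mpr ⟨Finset.mem_powerset.mpr ?_, Finset.mem_insert_self _ _⟩
          intro x hx
          rcases Finset.mem_insert.mp hx with rfl | hx
          · exact hm
          · exact Finset.mem_of_mem_erase (hA' hx)
        · intro B hB'
          exact Finset.insert_erase (Finset.mem_filter.mp hB').2
        · intro A hA
          exact Finset.erase_insert (fun h =>
            (Finset.mem_erase.mp (Finset.mem_powerset.mp hA h)).1 rfl)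
        · intro B hB'
          have hmB := (Finset.mem_filter.mp hB').2
          rw [Finset.card_erase_of_mem hmB]
          have : B.card - 1 + 1 = B.card := by
            have : 0 < B.card := Finset.card_pos.mpr ⟨m, hmB⟩
            omega
          rw [this]
      rw [hbij]
      -- now sum over the powerset by cardinality
      have hUcard : ((V.erase r).erase m).card = n - 2 := by
        rw [Finset.card_erase_of_mem hm, hWcard]
        omega
      rw [Finset.sum_powerset]
      have hstep : ∀ i ∈ Finset.range (((V.erase r).erase m).card + 1),
          ∑ A ∈ Finset.powersetCard i ((V.erase r).erase m),
            ((∑ j ∈ Finset.range (A.card + 1), (X : Polynomial ℤ) ^ j) *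
              (K A.card * K (V.card - (A.card + 1) - 1))) =
          (Nat.choose (n - 2) i : Polynomial ℤ) *
            ((∑ j ∈ Finset.range (i + 1), (X : Polynomial ℤ) ^ j) *
              (K i * K (n - 1 - 1 - i))) := by
        intro i hi
        have hcongr : ∀ A ∈ Finset.powersetCard i ((V.erase r).erase m),
            ((∑ j ∈ Finset.range (A.card + 1), (X : Polynomial ℤ) ^ j) *
              (K A.card * K (V.card - (A.card + 1) - 1))) =
            ((∑ j ∈ Finset.range (i + 1), (X : Polynomial ℤ) ^ j) *
              (K i * K (n - 1 - 1 - i))) := by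
          intro A hA
          have hAcard : A.card = i := (Finset.mem_powersetCard.mp hA).2
          rw [hAcard, (show V.card - (i + 1) - 1 = n - 1 - 1 - i by rw [hcard]; omega)]
        rw [Finset.sum_congr rfl hcongr, Finset.sum_const, Finset.card_powersetCard,
          hUcard, nsmul_eq_mul]
      rw [Finset.sum_congr rfl hstep, hUcard]
      -- identify with K (n-1)
      have hn1 : n - 1 = (n - 2) + 1 := by omega
      rw [hcard, hn1, K_succ]
      refine Finset.sum_congr rfl (fun i hi => ?_)
      rw [(show n - 2 + 1 - 1 - i = n - 1 - 1 - i by omega),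
        (show n - 2 - i = n - 1 - 1 - i by omega)]
      ring

/- ### transfer to SimpleGraph -/

lemma support_getElem? {V' : Type*} {G : SimpleGraph V'} {u v : V'} (p : G.Walk u v) :
    ∀ i, i ≤ p.length → p.support[i]? = some (p.getVert i) := by
  induction p with
  | nil =>
    intro i hi
    simp only [SimpleGraph.Walk.length_nil, Nat.le_zero] at hi
    subst hi
    simp [SimpleGraph.Walk.support_nil, SimpleGraph.Walk.getVert_zero]
  | cons h q ih =>
    intro i hi
    cases i with
    | zero => simp [SimpleGraph.Walk.support_cons, SimpleGraph.Walk.getVert_zero]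
    | succ i =>
      rw [SimpleGraph.Walk.support_cons, List.getElem?_cons_succ,
        SimpleGraph.Walk.getVert_cons_succ]
      exact ih i (by simpa [SimpleGraph.Walk.length_cons] using hi)

section Transfer

variable {n : ℕ}

/-- the graph associated to a parent list -/
def toG (n : ℕ) (T : Finset (ℕ × ℕ)) : SimpleGraph (Fin (n+1)) :=
  SimpleGraph.fromRel (fun a b => ((a : ℕ), (b : ℕ)) ∈ T)

lemma fin_mem_V (v : Fin (n+1)) : (v : ℕ) ∈ Finset.range (n+1) :=
  Finset.mem_range.mpr v.isLt

lemma fin_mem_V' {v : Fin (n+1)} (hv : v ≠ 0) :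
    (v : ℕ) ∈ (Finset.range (n+1)).erase 0 :=
  Finset.mem_erase.mpr ⟨fun h => hv (Fin.ext (by simpa using h)), fin_mem_V v⟩

/-- the parent function on `Fin (n+1)` -/
def fF (n : ℕ) (T : Finset (ℕ × ℕ)) : Fin (n+1) → Fin (n+1) := fun v =>
  if h : nxt T v.val < n + 1 then ⟨nxt T v.val, h⟩ else v

/-- depth of a vertex -/
def dep (n : ℕ) (T : Finset (ℕ × ℕ)) (v : Fin (n+1)) : ℕ :=
  if h : ∃ k, (nxt T)^[k] (v : ℕ) = 0 then Nat.find h else 0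

variable {T : Finset (ℕ × ℕ)} (hT : IsRT (Finset.range (n+1)) 0 T)

include hT

lemma fF_val (v : Fin (n+1)) : (fF n T v : ℕ) = nxt T v.val := by
  have h : nxt T v.val < n + 1 := by
    by_cases hv : (v : ℕ) ∈ (Finset.range (n+1)).erase 0
    · exact Finset.mem_range.mp (mem_of_rt hT (nxt_mem_rt hT hv)).2
    · rw [nxt_fix_rt hT hv]; exact v.isLt
  rw [fF, dif_pos h]

lemma iter_zero_fin : ∀ t, (nxt T)^[t] ((0 : Fin (n+1)) : ℕ) = 0 := by
  intro t
  have h0 : ((0 : Fin (n+1)) : ℕ) = 0 := rfl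
  rw [h0]
  have := iter_root_rt hT (k := t)
  exact this

lemma reach_fin (v : Fin (n+1)) : ∃ k, (nxt T)^[k] (v : ℕ) = 0 := by
  by_cases hv : v = 0
  · exact ⟨0, by simp [hv]⟩
  · obtain ⟨k, _, hk⟩ := hT.2.2 _ (fin_mem_V' hv)
    exact ⟨k, hk⟩

lemma dep_spec (v : Fin (n+1)) : (nxt T)^[dep n T v] (v : ℕ) = 0 := by
  rw [dep, dif_pos (reach_fin hT v)]
  exact Nat.find_spec (reach_fin hT v)

lemma dep_pos {v : Fin (n+1)} (hv : v ≠ 0) : 0 < dep n T v := by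
  rcases Nat.eq_zero_or_pos (dep n T v) with h | h
  · exfalso
    have := dep_spec hT v
    rw [h] at this
    simp only [Function.iterate_zero, id] at this
    exact hv (Fin.ext (by simpa using this))
  · exact h

lemma dep_fF_lt {v : Fin (n+1)} (hv : v ≠ 0) : dep n T (fF n T v) < dep n T v := by
  have hd := dep_spec hT v
  have hpos := dep_pos hT hv
  have hiter : (nxt T)^[dep n T v - 1] ((fF n T v : ℕ)) = 0 := by
    rw [fF_val hT, ← Function.iterate_succ_apply, Nat.succ_eq_add_one,
      (by omega : dep n T v - 1 + 1 = dep n T v)]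
    exact hd
  have hle : dep n T (fF n T v) ≤ dep n T v - 1 := by
    rw [dep, dif_pos (reach_fin hT _)]
    exact Nat.find_le hiter
  omega

lemma fF_ne {v : Fin (n+1)} (hv : v ≠ 0) : fF n T v ≠ v := by
  intro h
  have h1 : nxt T v.val = v.val := by
    rw [← fF_val hT, h]
  have h2 : ∀ k, (nxt T)^[k] (v : ℕ) = v.val := by
    intro k
    exact iter_absorb h1 (by simp) k (Nat.zero_le _)
  have := dep_spec hT v
  rw [h2] at this
  exact hv (Fin.ext (by simpa using this))

lemma adj_fF {v : Fin (n+1)} (hv : v ≠ 0) : (toG n T).Adj v (fF n T v) := by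
  rw [toG, SimpleGraph.fromRel_adj]
  refine ⟨(fF_ne hT hv).symm, Or.inl ?_⟩
  rw [fF_val hT]
  exact nxt_mem_rt hT (fin_mem_V' hv)

lemma adj_classify {u w : Fin (n+1)} (h : (toG n T).Adj u w) :
    (w = fF n T u ∧ u ≠ 0) ∨ (u = fF n T w ∧ w ≠ 0) := by
  rw [toG, SimpleGraph.fromRel_adj] at h
  obtain ⟨hne, huw | hwu⟩ := h
  · left
    have h1 := (mem_of_rt hT huw).1
    have hu0 : u ≠ 0 := fun h0 => by
      rw [h0] at h1
      exact (Finset.mem_erase.mp h1).1 rfl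
    refine ⟨Fin.ext ?_, hu0⟩
    rw [fF_val hT, nxt_eq_rt hT huw]
  · right
    have h1 := (mem_of_rt hT hwu).1
    have hw0 : w ≠ 0 := fun h0 => by
      rw [h0] at h1
      exact (Finset.mem_erase.mp h1).1 rfl
    refine ⟨Fin.ext ?_, hw0⟩
    rw [fF_val hT, nxt_eq_rt hT hwu]

lemma exists_canonical : ∀ (N : ℕ) (v : Fin (n+1)), dep n T v ≤ N →
    ∃ p : (toG n T).Walk v 0, p.IsPath ∧
      (∀ x : Fin (n+1), x ∈ p.support ↔ ∃ t, (nxt T)^[t] (v : ℕ) = (x : ℕ)) ∧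
      (∀ x ∈ p.support, dep n T x ≤ dep n T v) := by
  intro N
  induction N with
  | zero =>
    intro v hv
    have hv0 : v = 0 := by
      have := dep_spec hT v
      rw [Nat.le_zero.mp hv] at this
      simp only [Function.iterate_zero, id] at this
      exact Fin.ext (by simpa using this)
    subst hv0
    refine ⟨SimpleGraph.Walk.nil, SimpleGraph.Walk.IsPath.nil, fun x => ?_, by simp⟩
    simp only [SimpleGraph.Walk.support_nil, List.mem_singleton]
    constructor
    · rintro rfl
      exact ⟨0, by simp⟩
    · rintro ⟨t, ht⟩
      rw [iter_zero_fin hT t] at ht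
      exact Fin.ext ht.symm
  | succ N ihN =>
    intro v hv
    by_cases hv0 : v = 0
    · subst hv0
      refine ⟨SimpleGraph.Walk.nil, SimpleGraph.Walk.IsPath.nil, fun x => ?_, by simp⟩
      simp only [SimpleGraph.Walk.support_nil, List.mem_singleton]
      constructor
      · rintro rfl
        exact ⟨0, by simp⟩
      · rintro ⟨t, ht⟩
        rw [iter_zero_fin hT t] at ht
        exact Fin.ext ht.symm
    · have hdep : dep n T (fF n T v) ≤ N := by
        have := dep_fF_lt hT hv0
        omega
      obtain ⟨q, hq, hqsupp, hqdep⟩ := ihN (fF n T v) hdep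
      refine ⟨SimpleGraph.Walk.cons (adj_fF hT hv0) q, ?_, ?_, ?_⟩
      · rw [SimpleGraph.Walk.cons_isPath_iff]
        refine ⟨hq, fun hmem => ?_⟩
        have := hqdep v hmem
        have := dep_fF_lt hT hv0
        omega
      · intro x
        rw [SimpleGraph.Walk.support_cons, List.mem_cons]
        constructor
        · rintro (rfl | hx)
          · exact ⟨0, by simp⟩
          · obtain ⟨t, ht⟩ := (hqsupp x).mp hx
            refine ⟨t + 1, ?_⟩
            rw [Function.iterate_succ_apply, ← fF_val hT]
            exact ht
        · rintro ⟨t, ht⟩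
          cases t with
          | zero =>
            left
            simp only [Function.iterate_zero, id] at ht
            exact (Fin.ext ht).symm
          | succ t =>
            right
            refine (hqsupp x).mpr ⟨t, ?_⟩
            rw [fF_val hT]
            rw [Function.iterate_succ_apply] at ht
            exact ht
      · intro x hx
        rw [SimpleGraph.Walk.support_cons, List.mem_cons] at hx
        rcases hx with rfl | hx
        · exact le_rfl
        · have h1 := hqdep x hx
          have h2 := dep_fF_lt hT hv0
          omega

lemma toG_connected : (toG n T).Connected := by
  rw [SimpleGraph.connected_iff]
  refine ⟨fun u w => ?_, ⟨0⟩⟩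
  obtain ⟨p, -, -, -⟩ := exists_canonical hT (dep n T u) u le_rfl
  obtain ⟨q, -, -, -⟩ := exists_canonical hT (dep n T w) w le_rfl
  exact (p.reachable).trans (q.reachable).symm

lemma toG_acyclic : (toG n T).IsAcyclic := by
  intro v c hc
  classical
  have hvne : c.support.toFinset.Nonempty := ⟨v, by simp [SimpleGraph.Walk.start_mem_support]⟩
  obtain ⟨u, hu, hmax⟩ := Finset.exists_max_image c.support.toFinset (dep n T) hvne
  rw [List.mem_toFinset] at hu
  set c' := c.rotate u hu with hc'def
  have hc'cyc : c'.IsCycle := hc.rotate hu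
  have hlen3 : 3 ≤ c'.length := hc'cyc.three_le_length
  have hsupp_sub : ∀ x, x ∈ c'.support → x ∈ c.support := by
    intro x hx
    rw [SimpleGraph.Walk.support_eq_cons] at hx
    rcases List.mem_cons.mp hx with rfl | hx
    · exact hu
    · have hperm := SimpleGraph.Walk.support_rotate c u hu
      have := (hperm.mem_iff).mp hx
      rw [SimpleGraph.Walk.support_eq_cons c]
      exact List.mem_cons_of_mem _ this
  have hmax' : ∀ x ∈ c'.support, dep n T x ≤ dep n T u := by
    intro x hx
    exact hmax x (List.mem_toFinset.mpr (hsupp_sub x hx))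
  set x := c'.getVert 1 with hx
  set y := c'.getVert (c'.length - 1) with hy
  have hadj_ux : (toG n T).Adj u x := by
    have := c'.adj_getVert_succ (i := 0) (by omega)
    simpa using this
  have hadj_yu : (toG n T).Adj y u := by
    have := c'.adj_getVert_succ (i := c'.length - 1) (by omega)
    rw [(by omega : c'.length - 1 + 1 = c'.length), SimpleGraph.Walk.getVert_length] at this
    exact this
  have hxmem : x ∈ c'.support :=
    SimpleGraph.Walk.mem_support_iff_exists_getVert.mpr ⟨1, rfl, by omega⟩
  have hymem : y ∈ c'.support :=
    SimpleGraph.Walk.mem_support_iff_exists_getVert.mpr ⟨c'.length - 1, rfl, by omega⟩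
  have hxeq : x = fF n T u := by
    rcases adj_classify hT hadj_ux with ⟨h1, -⟩ | ⟨h1, hx0⟩
    · exact h1
    · exfalso
      have := dep_fF_lt hT hx0
      rw [← h1] at this
      exact absurd (hmax' x hxmem) (by omega)
  have hyeq : y = fF n T u := by
    rcases adj_classify hT hadj_yu with ⟨h1, hy0⟩ | ⟨h1, -⟩
    · exfalso
      have := dep_fF_lt hT hy0
      rw [← h1] at this
      exact absurd (hmax' y hymem) (by omega)
    · exact h1
  -- but positions 1 and length-1 in the support are distinct, contradicting Nodup
  have hnodup : c'.support.tail.Nodup := hc'cyc.2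
  have hlensupp : c'.support.length = c'.length + 1 := SimpleGraph.Walk.length_support c'
  have htail : c'.support.tail.length = c'.length := by
    rw [SimpleGraph.Walk.support_eq_cons] at hlensupp
    simpa using hlensupp
  have hget1 : c'.support.tail[0]? = some x := by
    have h1 := support_getElem? c' 1 (by omega)
    rw [SimpleGraph.Walk.support_eq_cons, List.getElem?_cons_succ] at h1
    exact h1
  have hget2 : c'.support.tail[c'.length - 2]? = some y := by
    have h1 := support_getElem? c' (c'.length - 1) (by omega)
    rw [SimpleGraph.Walk.support_eq_cons,
      (by omega : c'.length - 1 = (c'.length - 2) + 1), List.getElem?_cons_succ] at h1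
    rw [hy, (by omega : c'.length - 1 = (c'.length - 2) + 1)]
    exact h1
  have : (0 : ℕ) = c'.length - 2 := by
    refine (List.getElem?_inj (i := 0) (by omega) hnodup).mp ?_
    rw [hget1, hget2, hxeq, hyeq]
  omega

lemma toG_isTree : (toG n T).IsTree := ⟨toG_connected hT, toG_acyclic hT⟩

end Transfer

section Transfer2

variable {n : ℕ} {T : Finset (ℕ × ℕ)} (hT : IsRT (Finset.range (n+1)) 0 T)

include hT

lemma path_supp {v : Fin (n+1)} (p : (toG n T).Walk v 0) (hp : p.IsPath) :
    ∀ x : Fin (n+1), x ∈ p.support ↔ ∃ t, (nxt T)^[t] (v : ℕ) = (x : ℕ) := by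
  obtain ⟨q, hq, hsupp, -⟩ := exists_canonical hT (dep n T v) v le_rfl
  have hpq : p = q := Subtype.ext_iff.mp ((toG_acyclic hT).path_unique ⟨p, hp⟩ ⟨q, hq⟩)
  rw [hpq]
  exact hsupp

lemma dep_lt_of_iter {v x : Fin (n+1)} (hx0 : x ≠ 0) {t : ℕ} (ht : 0 < t)
    (hit : (nxt T)^[t] (v : ℕ) = (x : ℕ)) : dep n T x < dep n T v := by
  have hdv := dep_spec hT v
  by_cases htd : t ≤ dep n T v
  · have h1 : (nxt T)^[dep n T v - t] ((x : ℕ)) = 0 := by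
      rw [← hit, ← Function.iterate_add_apply, (by omega : dep n T v - t + t = dep n T v)]
      exact hdv
    have h2 : dep n T x ≤ dep n T v - t := by
      rw [dep, dif_pos (reach_fin hT _)]
      exact Nat.find_le h1
    omega
  · exfalso
    have h1 : (nxt T)^[t] (v : ℕ) = 0 := by
      have h0 : nxt T 0 = 0 := nxt_fix_rt hT (Finset.notMem_erase _ _)
      exact iter_absorb h0 hdv t (by omega)
    rw [hit] at h1
    exact hx0 (Fin.ext (by simpa using h1))

lemma getVert_one_eq {v : Fin (n+1)} (hv : v ≠ 0) (p : (toG n T).Walk v 0)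
    (hp : p.IsPath) : p.getVert 1 = fF n T v := by
  have hnil : ¬ p.Nil := SimpleGraph.Walk.not_nil_of_ne hv
  have hadj : (toG n T).Adj v (p.getVert 1) := p.adj_snd hnil
  rcases adj_classify hT hadj with ⟨h1, -⟩ | ⟨h1, hx0⟩
  · exact h1
  · exfalso
    set x := p.getVert 1 with hxdef
    have hxmem : x ∈ p.support := by
      rw [SimpleGraph.Walk.mem_support_iff_exists_getVert]
      refine ⟨1, rfl, ?_⟩
      rw [SimpleGraph.Walk.not_nil_iff_lt_length] at hnil
      omega
    obtain ⟨t, hiter⟩ := (path_supp hT p hp x).mp hxmem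
    have ht0 : 0 < t := by
      rcases Nat.eq_zero_or_pos t with rfl | h
      · exfalso
        simp only [Function.iterate_zero, id] at hiter
        exact hadj.ne (Fin.ext hiter)
      · exact h
    have h2 := dep_lt_of_iter hT hx0 ht0 hiter
    have h3 := dep_fF_lt hT hx0
    rw [← h1] at h3
    omega

end Transfer2

section Inverse

variable {n : ℕ}

/-- the canonical path to the root in a tree -/
noncomputable def cpath (G : SimpleGraph (Fin (n+1))) (hG : G.IsTree) (v : Fin (n+1)) :
    G.Walk v 0 := (hG.existsUnique_path v 0).choose

lemma cpath_isPath (G : SimpleGraph (Fin (n+1))) (hG : G.IsTree) (v : Fin (n+1)) :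
    (cpath G hG v).IsPath := (hG.existsUnique_path v 0).choose_spec.1

lemma cpath_unique (G : SimpleGraph (Fin (n+1))) (hG : G.IsTree) {v : Fin (n+1)}
    (p : G.Walk v 0) (hp : p.IsPath) : p = cpath G hG v :=
  (hG.existsUnique_path v 0).choose_spec.2 p hp

/-- the parent map of a tree -/
noncomputable def parOf (G : SimpleGraph (Fin (n+1))) (hG : G.IsTree) (v : Fin (n+1)) :
    Fin (n+1) := (cpath G hG v).getVert 1

/-- the parent list of a tree -/
noncomputable def TOf (G : SimpleGraph (Fin (n+1))) (hG : G.IsTree) : Finset (ℕ × ℕ) :=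
  (Finset.univ.filter (fun v : Fin (n+1) => v ≠ 0)).image
    (fun (v : Fin (n+1)) => ((v : ℕ), (parOf G hG v : ℕ)))

lemma mem_TOf {G : SimpleGraph (Fin (n+1))} {hG : G.IsTree} {a b : ℕ} :
    (a, b) ∈ TOf G hG ↔ ∃ v : Fin (n+1), v ≠ 0 ∧ (v : ℕ) = a ∧ (parOf G hG v : ℕ) = b := by
  constructor
  · intro h
    simp only [TOf, Finset.mem_image, Finset.mem_filter, Finset.mem_univ, true_and] at h
    obtain ⟨v, hv, heq⟩ := h
    rw [Prod.mk.injEq] at heq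
    exact ⟨v, hv, heq.1, heq.2⟩
  · rintro ⟨v, hv, ha, hb⟩
    simp only [TOf, Finset.mem_image, Finset.mem_filter, Finset.mem_univ, true_and]
    exact ⟨v, hv, by rw [ha, hb]⟩

lemma adj_parOf {G : SimpleGraph (Fin (n+1))} (hG : G.IsTree) {v : Fin (n+1)} (hv : v ≠ 0) :
    G.Adj v (parOf G hG v) :=
  (cpath G hG v).adj_snd (SimpleGraph.Walk.not_nil_of_ne hv)

lemma cpath_parOf {G : SimpleGraph (Fin (n+1))} (hG : G.IsTree) {v : Fin (n+1)} (hv : v ≠ 0) :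
    (cpath G hG v).length = (cpath G hG (parOf G hG v)).length + 1 := by
  have hnil : ¬ (cpath G hG v).Nil := SimpleGraph.Walk.not_nil_of_ne hv
  have htail : (cpath G hG v).tail.IsPath := (cpath_isPath G hG v).tail
  have h1 := cpath_unique G hG ((cpath G hG v).tail) htail
  simp only [parOf]
  rw [← h1]
  exact (SimpleGraph.Walk.length_tail_add_one hnil).symm

/-- the parent of any non-root vertex w.r.t. any adjacency -/
lemma adj_parOf_cases {G : SimpleGraph (Fin (n+1))} (hG : G.IsTree) {u w : Fin (n+1)}
    (h : G.Adj u w) : (u ≠ 0 ∧ parOf G hG u = w) ∨ (w ≠ 0 ∧ parOf G hG w = u) := by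
  classical
  by_cases hu0 : u = 0
  · subst hu0
    have hw0 : w ≠ 0 := h.ne'
    right
    refine ⟨hw0, ?_⟩
    have hsing : (SimpleGraph.Walk.cons h.symm SimpleGraph.Walk.nil : G.Walk w 0).IsPath := by
      rw [SimpleGraph.Walk.cons_isPath_iff]
      exact ⟨SimpleGraph.Walk.IsPath.nil, by simp [h.ne']⟩
    have := cpath_unique G hG _ hsing
    rw [parOf, ← this]
    rfl
  · by_cases hw0 : w = 0
    · subst hw0
      left
      refine ⟨hu0, ?_⟩
      have hsing : (SimpleGraph.Walk.cons h SimpleGraph.Walk.nil : G.Walk u 0).IsPath := by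
        rw [SimpleGraph.Walk.cons_isPath_iff]
        exact ⟨SimpleGraph.Walk.IsPath.nil, by simp [h.ne]⟩
      have := cpath_unique G hG _ hsing
      rw [parOf, ← this]
      rfl
    · set p := cpath G hG u with hpdef
      by_cases hwp : w ∈ p.support
      · left
        refine ⟨hu0, ?_⟩
        have htake : (p.takeUntil w hwp).IsPath := (cpath_isPath G hG u).takeUntil hwp
        have hsingle : p.takeUntil w hwp = (SimpleGraph.Path.singleton h).1 := by
          have := (SimpleGraph.isAcyclic_iff_path_unique.mp hG.2)
            ⟨p.takeUntil w hwp, htake⟩ (SimpleGraph.Path.singleton h)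
          exact Subtype.ext_iff.mp this
        have hspec := p.take_spec hwp
        rw [hsingle] at hspec
        have h2 : ((SimpleGraph.Path.singleton h).1.append (p.dropUntil w hwp)).getVert 1
            = w := by
          show (SimpleGraph.Walk.cons h (SimpleGraph.Walk.nil.append
            (p.dropUntil w hwp))).getVert 1 = w
          rw [SimpleGraph.Walk.getVert_cons_succ]
          exact SimpleGraph.Walk.getVert_zero _
        have h3 : p.getVert 1 = w := by rw [← hspec]; exact h2
        simp only [parOf]
        rw [← hpdef, h3]
      · right
        refine ⟨hw0, ?_⟩
        have hcons : (SimpleGraph.Walk.cons h.symm p).IsPath := by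
          rw [SimpleGraph.Walk.cons_isPath_iff]
          exact ⟨cpath_isPath G hG u, hwp⟩
        have := cpath_unique G hG _ hcons
        simp only [parOf]
        rw [← this, SimpleGraph.Walk.getVert_cons_succ]
        exact SimpleGraph.Walk.getVert_zero _

lemma unique_TOf {G : SimpleGraph (Fin (n+1))} (hG : G.IsTree) {a : ℕ}
    (ha : a ∈ (Finset.range (n+1)).erase 0) : ∃! b : ℕ, (a, b) ∈ TOf G hG := by
  obtain ⟨ha0, haR⟩ := Finset.mem_erase.mp ha
  set v : Fin (n+1) := ⟨a, Finset.mem_range.mp haR⟩ with hvdef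
  have hv0 : v ≠ 0 := fun h => ha0 (congrArg Fin.val h)
  refine ⟨(parOf G hG v : ℕ), mem_TOf.mpr ⟨v, hv0, rfl, rfl⟩, ?_⟩
  rintro b hb
  obtain ⟨v', hv', ha', hb'⟩ := mem_TOf.mp hb
  have : v' = v := Fin.ext (by rw [ha'])
  rw [← hb', this]

lemma nxt_TOf {G : SimpleGraph (Fin (n+1))} (hG : G.IsTree) {v : Fin (n+1)} (hv : v ≠ 0) :
    nxt (TOf G hG) (v : ℕ) = (parOf G hG v : ℕ) := by
  have ha : (v : ℕ) ∈ (Finset.range (n+1)).erase 0 := fin_mem_V' hv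
  exact nxt_eq_of_mem (unique_TOf hG ha) (mem_TOf.mpr ⟨v, hv, rfl, rfl⟩)

lemma reach_TOf {G : SimpleGraph (Fin (n+1))} (hG : G.IsTree) :
    ∀ (L : ℕ) (v : Fin (n+1)), (cpath G hG v).length ≤ L → v ≠ 0 →
      reaches (TOf G hG) (v : ℕ) 0 := by
  intro L
  induction L with
  | zero =>
    intro v hlen hv
    exfalso
    have : ¬ (cpath G hG v).Nil := SimpleGraph.Walk.not_nil_of_ne hv
    rw [SimpleGraph.Walk.not_nil_iff_lt_length] at this
    omega
  | succ L ih =>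
    intro v hlen hv
    by_cases hp0 : parOf G hG v = 0
    · refine ⟨1, Nat.one_pos, ?_⟩
      simp only [Function.iterate_one]
      rw [nxt_TOf hG hv, hp0]
      rfl
    · have hlen' : (cpath G hG (parOf G hG v)).length ≤ L := by
        have := cpath_parOf hG hv
        omega
      obtain ⟨k, hk, hit⟩ := ih (parOf G hG v) hlen' hp0
      refine ⟨k + 1, Nat.succ_pos _, ?_⟩
      rw [Function.iterate_succ_apply, nxt_TOf hG hv]
      exact hit

lemma isRT_TOf {G : SimpleGraph (Fin (n+1))} (hG : G.IsTree) :
    IsRT (Finset.range (n+1)) 0 (TOf G hG) := by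
  refine ⟨?_, fun a ha => unique_TOf hG ha, fun a ha => ?_⟩
  · intro p hp
    obtain ⟨a, b⟩ := p
    obtain ⟨v, hv, rfl, rfl⟩ := mem_TOf.mp hp
    exact Finset.mem_product.mpr ⟨fin_mem_V' hv, fin_mem_V _⟩
  · obtain ⟨ha0, haR⟩ := Finset.mem_erase.mp ha
    set v : Fin (n+1) := ⟨a, Finset.mem_range.mp haR⟩ with hvdef
    have hv0 : v ≠ 0 := fun h => ha0 (congrArg Fin.val h)
    exact reach_TOf hG (cpath G hG v).length v le_rfl hv0

lemma toG_TOf {G : SimpleGraph (Fin (n+1))} (hG : G.IsTree) : toG n (TOf G hG) = G := by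
  ext u w
  rw [toG, SimpleGraph.fromRel_adj]
  constructor
  · rintro ⟨hne, huw | hwu⟩
    · obtain ⟨v, hv, ha, hb⟩ := mem_TOf.mp huw
      have hvu : v = u := Fin.ext ha
      subst hvu
      have : parOf G hG v = w := Fin.ext hb
      rw [← this]
      exact adj_parOf hG hv
    · obtain ⟨v, hv, ha, hb⟩ := mem_TOf.mp hwu
      have hvw : v = w := Fin.ext ha
      subst hvw
      have : parOf G hG v = u := Fin.ext hb
      rw [← this]
      exact (adj_parOf hG hv).symm
  · intro h
    refine ⟨h.ne, ?_⟩
    rcases adj_parOf_cases hG h with ⟨hu0, hpar⟩ | ⟨hw0, hpar⟩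
    · exact Or.inl (mem_TOf.mpr ⟨u, hu0, rfl, by rw [hpar]⟩)
    · exact Or.inr (mem_TOf.mpr ⟨w, hw0, rfl, by rw [hpar]⟩)

lemma TOf_toG {T : Finset (ℕ × ℕ)} (hT : IsRT (Finset.range (n+1)) 0 T) :
    TOf (toG n T) (toG_isTree hT) = T := by
  ext ⟨a, b⟩
  rw [mem_TOf]
  constructor
  · rintro ⟨v, hv, rfl, rfl⟩
    have hpar : parOf (toG n T) (toG_isTree hT) v = fF n T v := by
      rw [parOf]
      exact getVert_one_eq hT hv _ (cpath_isPath _ _ v)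
    rw [hpar, fF_val hT]
    exact nxt_mem_rt hT (fin_mem_V' hv)
  · intro hab
    have ha := (mem_of_rt hT hab).1
    obtain ⟨ha0, haR⟩ := Finset.mem_erase.mp ha
    set v : Fin (n+1) := ⟨a, Finset.mem_range.mp haR⟩ with hvdef
    have hv0 : v ≠ 0 := fun h => ha0 (congrArg Fin.val h)
    refine ⟨v, hv0, rfl, ?_⟩
    have hpar : parOf (toG n T) (toG_isTree hT) v = fF n T v := by
      rw [parOf]
      exact getVert_one_eq hT hv0 _ (cpath_isPath _ _ v)
    rw [hpar, fF_val hT]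
    exact (nxt_eq_rt hT hab).symm ▸ rfl

end Inverse

end KrewerasAux

namespace KrewerasAux

lemma inv_iff {n : ℕ} {T : Finset (ℕ × ℕ)} (hT : IsRT (Finset.range (n+1)) 0 T)
    (i j : Fin (n+1)) :
    (0 < (i : ℕ) ∧ i < j ∧ OnPath (toG n T) i j) ↔
      ((i : ℕ) < (j : ℕ) ∧ reaches T (i : ℕ) (j : ℕ)) := by
  constructor
  · rintro ⟨hi0, hij, honp⟩
    have hlt : (i : ℕ) < (j : ℕ) := hij
    refine ⟨hlt, ?_⟩
    obtain ⟨p, hp, -, -⟩ := exists_canonical hT (dep n T i) i le_rfl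
    have hmem : j ∈ p.support := honp p hp
    obtain ⟨t, ht⟩ := (path_supp hT p hp j).mp hmem
    have ht0 : 0 < t := by
      rcases Nat.eq_zero_or_pos t with rfl | h
      · simp only [Function.iterate_zero, id] at ht
        omega
      · exact h
    exact ⟨t, ht0, ht⟩
  · rintro ⟨hlt, hre⟩
    have hi0 : 0 < (i : ℕ) := by
      rcases Nat.eq_zero_or_pos (i : ℕ) with h0 | h
      · exfalso
        have : (i : ℕ) = ((0 : Fin (n+1)) : ℕ) := by simpa using h0
        rw [this] at hre
        have := reaches_root_rt hT hre
        omega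
      · exact h
    refine ⟨hi0, hlt, ?_⟩
    intro p hp
    obtain ⟨t, -, ht⟩ := hre
    exact (path_supp hT p hp j).mpr ⟨t, ht⟩

lemma treeInv_toG {n : ℕ} {T : Finset (ℕ × ℕ)} (hT : IsRT (Finset.range (n+1)) 0 T) :
    treeInv (toG n T) = stat (Finset.range (n+1)) T := by
  classical
  rw [treeInv, Nat.card_eq_fintype_card, Fintype.card_subtype, stat]
  refine Finset.card_bij (fun p _ => ((p.1 : ℕ), (p.2 : ℕ))) ?_ ?_ ?_
  · intro p hp
    rw [Finset.mem_filter] at hp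
    obtain ⟨-, hp⟩ := hp
    have := (inv_iff hT p.1 p.2).mp hp
    exact Finset.mem_filter.mpr ⟨Finset.mem_product.mpr ⟨fin_mem_V _, fin_mem_V _⟩, this⟩
  · intro p hp q hq heq
    rw [Prod.mk.injEq] at heq
    exact Prod.ext (Fin.ext heq.1) (Fin.ext heq.2)
  · intro q hq
    rw [Finset.mem_filter, Finset.mem_product] at hq
    obtain ⟨⟨h1, h2⟩, hcond⟩ := hq
    set i : Fin (n+1) := ⟨q.1, Finset.mem_range.mp h1⟩
    set j : Fin (n+1) := ⟨q.2, Finset.mem_range.mp h2⟩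
    refine ⟨(i, j), Finset.mem_filter.mpr ⟨Finset.mem_univ _, (inv_iff hT i j).mpr hcond⟩, rfl⟩

lemma treeInvEnum_eq_K (n : ℕ) : treeInvEnum n = K n := by
  classical
  have h1 : treeInvEnum n = Ip (Finset.range (n+1)) 0 := by
    rw [treeInvEnum, finsum_eq_sum_of_fintype, Ip]
    refine (Finset.sum_bij'
      (fun T hT' => (⟨toG n T, toG_isTree (mem_rtrees.mp hT')⟩ :
        {G : SimpleGraph (Fin (n+1)) // G.IsTree}))
      (fun G _ => TOf G.val G.property) ?_ ?_ ?_ ?_ ?_).symm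
    · intro a _
      exact Finset.mem_univ _
    · intro G _
      exact mem_rtrees.mpr (isRT_TOf G.property)
    · intro T hT'
      exact TOf_toG (mem_rtrees.mp hT')
    · intro G _
      exact Subtype.ext (toG_TOf G.property)
    · intro T hT'
      rw [treeInv_toG (mem_rtrees.mp hT')]
  rw [h1, Ip_eq (Finset.range (n+1)).card _ 0 (Finset.mem_range.mpr (Nat.succ_pos n)) rfl]
  have hrank : rank (Finset.range (n+1)) 0 = 0 := by
    rw [rank, Finset.card_eq_zero, Finset.filter_eq_empty_iff]
    intro a _
    omega
  rw [hrank, pow_zero, one_mul, Finset.card_range]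
  simp

end KrewerasAux

/-- Kreweras' recurrence for the tree inversion enumerator. -/
theorem treeInvEnum_recurrence :
    treeInvEnum 0 = 1 ∧
    ∀ n : ℕ, 1 ≤ n →
      treeInvEnum n = ∑ i ∈ Finset.range n,
        (Nat.choose (n-1) i : Polynomial ℤ) * (∑ k ∈ Finset.range (i+1), X ^ k) *
          treeInvEnum i * treeInvEnum (n-1-i) := by
  constructor
  · rw [KrewerasAux.treeInvEnum_eq_K 0, KrewerasAux.K_zero]
  · intro n hn
    obtain ⟨m, rfl⟩ : ∃ m, n = m + 1 := ⟨n - 1, by omega⟩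
    rw [KrewerasAux.treeInvEnum_eq_K (m+1), KrewerasAux.K_succ]
    refine Finset.sum_congr rfl (fun i hi => ?_)
    simp only [Nat.add_sub_cancel]
    rw [KrewerasAux.treeInvEnum_eq_K i, KrewerasAux.treeInvEnum_eq_K (m - i)]
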